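/- arXiv:math/0304328 — 3 statements merged into one kernel-verified Lean document; each statement's English description precedes it below -/
import Mathlib

section
/- Let g be a finite-dimensional real quadratic Lie algebra and C ∈ Cl(g) its cubic element. Define the odd operator δ on the ℤ₂-graded Clifford algebra Cl(g) by δ(x) = C·x − (−1)^{|x|}·x·C for x homogeneous of parity |x| ∈ {0,1}, extended linearly. Then δ is a differential: δ(δ(x)) = 0 for every x ∈ Cl(g). -/
/-!
STATEMENT 1: Let g be a finite-dimensional real quadratic Lie algebra and C ∈ Cl(g) its
cubic element.  Define the odd operator δ on the ℤ₂-graded Clifford algebra Cl(g) by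
δ(x) = C·x − (−1)^{|x|}·x·C for x homogeneous of parity |x| ∈ {0,1}, extended linearly.
Then δ is a differential: δ(δ(x)) = 0 for every x ∈ Cl(g).
-/

open CliffordAlgebra

namespace CliffDiffAux

section
set_option linter.unusedSectionVars false
set_option maxHeartbeats 1000000

variable {g : Type*} [LieRing g] [LieAlgebra ℝ g]
    (B : g →ₗ[ℝ] g →ₗ[ℝ] ℝ)
    (Q : QuadraticForm ℝ g)
    {κ : Type*} [Fintype κ] [DecidableEq κ] (e : Module.Basis κ ℝ g) (e' : κ → g)
    (f : κ → κ → κ → ℝ)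

theorem my_swap (hB_symm : ∀ x y : g, B x y = B y x)
    (hQ : ∀ v : g, Q v = (1 / 2 : ℝ) * B v v) (u w : g) :
    ι Q u * ι Q w = B u w • (1 : CliffordAlgebra Q) - ι Q w * ι Q u := by
  rw [ι_mul_ι_comm, Algebra.algebraMap_eq_smul_one]
  congr 2
  rw [QuadraticMap.polar, hQ, hQ, hQ]
  simp only [map_add, LinearMap.add_apply]
  rw [hB_symm w u]
  ring

theorem anti3 (hB_symm : ∀ x y : g, B x y = B y x)
    (hQ : ∀ v : g, Q v = (1 / 2 : ℝ) * B v v) (v x y z : g) :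
    ι Q v * (ι Q x * ι Q y * ι Q z) + (ι Q x * ι Q y * ι Q z) * ι Q v
      = B v x • (ι Q y * ι Q z) - B v y • (ι Q x * ι Q z) + B v z • (ι Q x * ι Q y) := by
  have hx := my_swap B Q hB_symm hQ v x
  have hy := my_swap B Q hB_symm hQ v y
  have hz := my_swap B Q hB_symm hQ v z
  calc ι Q v * (ι Q x * ι Q y * ι Q z) + (ι Q x * ι Q y * ι Q z) * ι Q v
      = (ι Q v * ι Q x) * (ι Q y * ι Q z) + (ι Q x * ι Q y * ι Q z) * ι Q v := by
        noncomm_ring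
    _ = B v x • (ι Q y * ι Q z) - ι Q x * ((ι Q v * ι Q y) * ι Q z) + (ι Q x * ι Q y * ι Q z) * ι Q v := by
        rw [hx]; simp only [sub_mul, smul_mul_assoc, one_mul]; noncomm_ring
    _ = B v x • (ι Q y * ι Q z) - B v y • (ι Q x * ι Q z) + ι Q x * (ι Q y * (ι Q v * ι Q z)) + (ι Q x * ι Q y * ι Q z) * ι Q v := by
        rw [hy]; simp only [sub_mul, smul_mul_assoc, one_mul, mul_sub, mul_smul_comm]; noncomm_ring
    _ = B v x • (ι Q y * ι Q z) - B v y • (ι Q x * ι Q z) + B v z • (ι Q x * ι Q y) := by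
        rw [hz]; simp only [mul_sub, mul_smul_comm, mul_one, smul_eq_mul]; noncomm_ring

theorem comm2 (hB_symm : ∀ x y : g, B x y = B y x)
    (hQ : ∀ v : g, Q v = (1 / 2 : ℝ) * B v v) (x y w : g) :
    (ι Q x * ι Q y) * ι Q w - ι Q w * (ι Q x * ι Q y)
      = B w y • ι Q x - B w x • ι Q y := by
  have hx := my_swap B Q hB_symm hQ w x
  have hy := my_swap B Q hB_symm hQ w y
  calc (ι Q x * ι Q y) * ι Q w - ι Q w * (ι Q x * ι Q y)
      = (ι Q x * ι Q y) * ι Q w - (ι Q w * ι Q x) * ι Q y := by noncomm_ring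
    _ = (ι Q x * ι Q y) * ι Q w - B w x • ι Q y + ι Q x * (ι Q w * ι Q y) := by
        rw [hx]; simp only [sub_mul, smul_mul_assoc, one_mul]; noncomm_ring
    _ = B w y • ι Q x - B w x • ι Q y := by
        rw [hy]; simp only [mul_sub, mul_smul_comm, mul_one]; noncomm_ring

theorem coeff_eq (h_dual : ∀ a b : κ, B (e a) (e' b) = if a = b then 1 else 0)
    (v : g) (a : κ) : B v (e' a) = e.repr v a := by
  conv_lhs => rw [← e.sum_repr v]
  simp only [map_sum, map_smul, LinearMap.coe_sum, Finset.sum_apply, LinearMap.smul_apply,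
    smul_eq_mul, h_dual]
  simp [Finset.sum_ite_eq', mul_comm]

theorem dual_expand_e (h_dual : ∀ a b : κ, B (e a) (e' b) = if a = b then 1 else 0)
    (v : g) : ∑ a, B v (e' a) • e a = v := by
  conv_rhs => rw [← e.sum_repr v]
  refine Finset.sum_congr rfl fun a _ => ?_
  rw [coeff_eq B e e' h_dual]

theorem dual_expand_e' (hB_symm : ∀ x y : g, B x y = B y x)
    (hB_nondeg : ∀ x : g, (∀ y : g, B x y = 0) → x = 0)
    (h_dual : ∀ a b : κ, B (e a) (e' b) = if a = b then 1 else 0)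
    (v : g) : ∑ a, B (e a) v • e' a = v := by
  have key : ∀ b : κ, B (e b) (∑ a, B (e a) v • e' a - v) = 0 := by
    intro b
    simp only [map_sub, map_sum, map_smul, smul_eq_mul, h_dual]
    rw [Finset.sum_eq_single b]
    · simp [hB_symm (e b) v]
    · intro c _ hc; simp [hc]; intro h; exact absurd h.symm hc
    · simp
  have h0 : (∑ a, B (e a) v • e' a - v) = 0 := by
    apply hB_nondeg
    intro y
    rw [hB_symm]
    conv_lhs => rw [← e.sum_repr y]
    rw [map_sum, LinearMap.sum_apply]
    refine Finset.sum_eq_zero fun b _ => ?_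
    rw [map_smul, LinearMap.smul_apply, key b, smul_zero]
  exact sub_eq_zero.mp h0

theorem fcyc (hB_symm : ∀ x y : g, B x y = B y x)
    (hB_inv : ∀ x y z : g, B ⁅x, y⁆ z = B x ⁅y, z⁆)
    (hf : ∀ a b c : κ, f a b c = B (e a) ⁅e b, e c⁆) (a b c : κ) :
    f a b c = f c a b := by
  rw [hf, hf, ← hB_inv, hB_symm]

theorem fskew23 (hf : ∀ a b c : κ, f a b c = B (e a) ⁅e b, e c⁆) (a b c : κ) :
    f a b c = - f a c b := by
  rw [hf, hf, ← lie_skew (e c), map_neg]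
  ring

theorem fskew12 (hB_symm : ∀ x y : g, B x y = B y x)
    (hB_inv : ∀ x y z : g, B ⁅x, y⁆ z = B x ⁅y, z⁆)
    (hf : ∀ a b c : κ, f a b c = B (e a) ⁅e b, e c⁆) (a b c : κ) :
    f b a c = - f a b c := by
  rw [fcyc B e f hB_symm hB_inv hf b a c, fskew23 B e f hf c b a,
    ← fcyc B e f hB_symm hB_inv hf a b c]

/-- v ↦ B x ⁅v, z⁆ as a linear map -/
def brkL (x z : g) : g →ₗ[ℝ] ℝ where
  toFun v := B x ⁅v, z⁆
  map_add' a b := by simp [add_lie]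
  map_smul' r a := by simp [smul_lie]

/-- v ↦ B x ⁅q, v⁆ as a linear map -/
def brkR (x q : g) : g →ₗ[ℝ] ℝ where
  toFun v := B x ⁅q, v⁆
  map_add' a b := by simp [lie_add]
  map_smul' r a := by simp [lie_smul]

theorem contract_e (h_dual : ∀ a b : κ, B (e a) (e' b) = if a = b then 1 else 0)
    (L : g →ₗ[ℝ] ℝ) (u : g) : ∑ b, B u (e' b) * L (e b) = L u := by
  conv_rhs => rw [← dual_expand_e B e e' h_dual u]
  rw [map_sum]
  exact Finset.sum_congr rfl fun b _ => by rw [map_smul, smul_eq_mul]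

theorem anti_C_basis
    (hB_symm : ∀ x y : g, B x y = B y x)
    (hB_inv : ∀ x y z : g, B ⁅x, y⁆ z = B x ⁅y, z⁆)
    (h_dual : ∀ a b : κ, B (e a) (e' b) = if a = b then 1 else 0)
    (hQ : ∀ v : g, Q v = (1 / 2 : ℝ) * B v v)
    (hf : ∀ a b c : κ, f a b c = B (e a) ⁅e b, e c⁆)
    (d : κ) :
    ((1/6 : ℝ) • ∑ a : κ, ∑ b : κ, ∑ c : κ, f a b c • (ι Q (e' a) * ι Q (e' b) * ι Q (e' c))) * ι Q (e d)
    + ι Q (e d) * ((1/6 : ℝ) • ∑ a : κ, ∑ b : κ, ∑ c : κ, f a b c • (ι Q (e' a) * ι Q (e' b) * ι Q (e' c)))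
    = (1/2 : ℝ) • ∑ b : κ, ∑ c : κ, f d b c • (ι Q (e' b) * ι Q (e' c)) := by
  have step1 :
      ((1/6 : ℝ) • ∑ a : κ, ∑ b : κ, ∑ c : κ, f a b c • (ι Q (e' a) * ι Q (e' b) * ι Q (e' c))) * ι Q (e d)
      + ι Q (e d) * ((1/6 : ℝ) • ∑ a : κ, ∑ b : κ, ∑ c : κ, f a b c • (ι Q (e' a) * ι Q (e' b) * ι Q (e' c)))
      = (1/6 : ℝ) • ∑ a : κ, ∑ b : κ, ∑ c : κ, f a b c •
          (ι Q (e d) * (ι Q (e' a) * ι Q (e' b) * ι Q (e' c))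
            + (ι Q (e' a) * ι Q (e' b) * ι Q (e' c)) * ι Q (e d)) := by
    rw [smul_mul_assoc, mul_smul_comm, ← smul_add]
    congr 1
    rw [Finset.sum_mul, Finset.mul_sum, add_comm, ← Finset.sum_add_distrib]
    refine Finset.sum_congr rfl fun a _ => ?_
    rw [Finset.sum_mul, Finset.mul_sum, ← Finset.sum_add_distrib]
    refine Finset.sum_congr rfl fun b _ => ?_
    rw [Finset.sum_mul, Finset.mul_sum, ← Finset.sum_add_distrib]
    refine Finset.sum_congr rfl fun c _ => ?_
    rw [smul_mul_assoc, mul_smul_comm, ← smul_add]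
  rw [step1]
  have step2 : ∀ a b c : κ, f a b c •
          (ι Q (e d) * (ι Q (e' a) * ι Q (e' b) * ι Q (e' c))
            + (ι Q (e' a) * ι Q (e' b) * ι Q (e' c)) * ι Q (e d))
      = (if d = a then f a b c • (ι Q (e' b) * ι Q (e' c)) else 0)
        - (if d = b then f a b c • (ι Q (e' a) * ι Q (e' c)) else 0)
        + (if d = c then f a b c • (ι Q (e' a) * ι Q (e' b)) else 0) := by
    intro a b c
    rw [anti3 B Q hB_symm hQ]
    rw [h_dual, h_dual, h_dual]
    simp only [ite_smul, one_smul, zero_smul, smul_ite, smul_zero, smul_sub, smul_add]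
  simp only [step2]
  simp only [Finset.sum_add_distrib, Finset.sum_sub_distrib, Finset.sum_ite_irrel,
    Finset.sum_const_zero, Finset.sum_ite_eq, Finset.mem_univ, if_true]
  have hY : ∑ a : κ, ∑ c : κ, f a d c • (ι Q (e' a) * ι Q (e' c))
      = - ∑ b : κ, ∑ c : κ, f d b c • (ι Q (e' b) * ι Q (e' c)) := by
    rw [← Finset.sum_neg_distrib]
    refine Finset.sum_congr rfl fun a _ => ?_
    rw [← Finset.sum_neg_distrib]
    refine Finset.sum_congr rfl fun c _ => ?_
    rw [fskew12 B e f hB_symm hB_inv hf d a c, neg_smul]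
  have hZ : ∑ a : κ, ∑ b : κ, f a b d • (ι Q (e' a) * ι Q (e' b))
      = ∑ b : κ, ∑ c : κ, f d b c • (ι Q (e' b) * ι Q (e' c)) := by
    refine Finset.sum_congr rfl fun a _ => Finset.sum_congr rfl fun b _ => ?_
    rw [fcyc B e f hB_symm hB_inv hf a b d]
  rw [hY, hZ]
  generalize (∑ b : κ, ∑ c : κ, f d b c • (ι Q (e' b) * ι Q (e' c))) = X
  module

theorem Td_comm
    (hB_symm : ∀ x y : g, B x y = B y x)
    (hB_nondeg : ∀ x : g, (∀ y : g, B x y = 0) → x = 0)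
    (hB_inv : ∀ x y z : g, B ⁅x, y⁆ z = B x ⁅y, z⁆)
    (h_dual : ∀ a b : κ, B (e a) (e' b) = if a = b then 1 else 0)
    (hQ : ∀ v : g, Q v = (1 / 2 : ℝ) * B v v)
    (hf : ∀ a b c : κ, f a b c = B (e a) ⁅e b, e c⁆)
    (d : κ) (w : g) :
    ((1/2 : ℝ) • ∑ b : κ, ∑ c : κ, f d b c • (ι Q (e' b) * ι Q (e' c))) * ι Q w
    - ι Q w * ((1/2 : ℝ) • ∑ b : κ, ∑ c : κ, f d b c • (ι Q (e' b) * ι Q (e' c)))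
    = - ι Q ⁅e d, w⁆ := by
  have key : ∀ b c : κ, f d b c = B ⁅e d, e b⁆ (e c) := fun b c => by
    rw [hf, ← hB_inv]
  have scal_contract : ∀ z w : g, ∑ c, B z (e c) * B w (e' c) = B z w := by
    intro z w
    conv_rhs => rw [← dual_expand_e B e e' h_dual w]
    rw [map_sum]
    exact Finset.sum_congr rfl fun c _ => by rw [map_smul, smul_eq_mul, mul_comm]
  have step1 :
      ((1/2 : ℝ) • ∑ b : κ, ∑ c : κ, f d b c • (ι Q (e' b) * ι Q (e' c))) * ι Q w
      - ι Q w * ((1/2 : ℝ) • ∑ b : κ, ∑ c : κ, f d b c • (ι Q (e' b) * ι Q (e' c)))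
      = (1/2 : ℝ) • ∑ b : κ, ∑ c : κ, f d b c •
          ((ι Q (e' b) * ι Q (e' c)) * ι Q w - ι Q w * (ι Q (e' b) * ι Q (e' c))) := by
    rw [smul_mul_assoc, mul_smul_comm, ← smul_sub]
    congr 1
    rw [Finset.sum_mul, Finset.mul_sum, ← Finset.sum_sub_distrib]
    refine Finset.sum_congr rfl fun b _ => ?_
    rw [Finset.sum_mul, Finset.mul_sum, ← Finset.sum_sub_distrib]
    refine Finset.sum_congr rfl fun c _ => ?_
    rw [smul_mul_assoc, mul_smul_comm, ← smul_sub]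
  rw [step1]
  have step2 : ∀ b c : κ, f d b c •
        ((ι Q (e' b) * ι Q (e' c)) * ι Q w - ι Q w * (ι Q (e' b) * ι Q (e' c)))
      = (f d b c * B w (e' c)) • ι Q (e' b) - (f d b c * B w (e' b)) • ι Q (e' c) := by
    intro b c
    rw [comm2 B Q hB_symm hQ, smul_sub, smul_smul, smul_smul]
  simp only [step2, Finset.sum_sub_distrib]
  have hsecond : ∑ b : κ, ∑ c : κ, (f d b c * B w (e' b)) • ι Q (e' c)
      = - ∑ b : κ, ∑ c : κ, (f d b c * B w (e' c)) • ι Q (e' b) := by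
    rw [Finset.sum_comm, ← Finset.sum_neg_distrib]
    refine Finset.sum_congr rfl fun b _ => ?_
    rw [← Finset.sum_neg_distrib]
    refine Finset.sum_congr rfl fun c _ => ?_
    rw [fskew23 B e f hf d b c]
    simp [neg_smul]
  rw [hsecond, sub_neg_eq_add]
  have hmain : ∑ b : κ, ∑ c : κ, (f d b c * B w (e' c)) • ι Q (e' b)
      = - ι Q ⁅e d, w⁆ := by
    have inner : ∀ b : κ, ∑ c : κ, f d b c * B w (e' c) = - B (e b) ⁅e d, w⁆ := by
      intro b
      simp only [key]
      rw [scal_contract ⁅e d, e b⁆ w]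
      rw [← hB_inv, ← lie_skew (e d) (e b), map_neg, LinearMap.neg_apply]
    calc ∑ b : κ, ∑ c : κ, (f d b c * B w (e' c)) • ι Q (e' b)
        = ∑ b : κ, (∑ c : κ, f d b c * B w (e' c)) • ι Q (e' b) := by
          exact Finset.sum_congr rfl fun b _ => by rw [Finset.sum_smul]
      _ = - ∑ b : κ, B (e b) ⁅e d, w⁆ • ι Q (e' b) := by
          rw [← Finset.sum_neg_distrib]
          exact Finset.sum_congr rfl fun b _ => by rw [inner b, neg_smul]
      _ = - ι Q ⁅e d, w⁆ := by
          congr 1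
          conv_rhs => rw [← dual_expand_e' B e e' hB_symm hB_nondeg h_dual ⁅e d, w⁆]
          rw [map_sum]
          exact Finset.sum_congr rfl fun b _ => (map_smul _ _ _).symm
  rw [hmain]
  generalize ι Q ⁅e d, w⁆ = X
  module

theorem Td_comm_C
    (hB_symm : ∀ x y : g, B x y = B y x)
    (hB_nondeg : ∀ x : g, (∀ y : g, B x y = 0) → x = 0)
    (hB_inv : ∀ x y z : g, B ⁅x, y⁆ z = B x ⁅y, z⁆)
    (h_dual : ∀ a b : κ, B (e a) (e' b) = if a = b then 1 else 0)
    (hQ : ∀ v : g, Q v = (1 / 2 : ℝ) * B v v)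
    (hf : ∀ a b c : κ, f a b c = B (e a) ⁅e b, e c⁆)
    (d : κ) :
    ((1/2 : ℝ) • ∑ b : κ, ∑ c : κ, f d b c • (ι Q (e' b) * ι Q (e' c))) *
      (∑ a : κ, ∑ b : κ, ∑ c : κ, f a b c • (ι Q (e' a) * ι Q (e' b) * ι Q (e' c)))
    - (∑ a : κ, ∑ b : κ, ∑ c : κ, f a b c • (ι Q (e' a) * ι Q (e' b) * ι Q (e' c))) *
      ((1/2 : ℝ) • ∑ b : κ, ∑ c : κ, f d b c • (ι Q (e' b) * ι Q (e' c))) = 0 := by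
  set T : CliffordAlgebra Q := (1/2 : ℝ) • ∑ b : κ, ∑ c : κ, f d b c • (ι Q (e' b) * ι Q (e' c)) with hT
  have hTE : ∀ w : g, T * ι Q w - ι Q w * T = - ι Q ⁅e d, w⁆ :=
    Td_comm B Q e e' f hB_symm hB_nondeg hB_inv h_dual hQ hf d
  clear_value T
  set E : κ → CliffordAlgebra Q := fun a => ι Q (e' a) with hE
  set M : κ → κ → ℝ := fun p a => B (e p) ⁅e d, e' a⁆ with hM
  have hTE2 : ∀ a : κ, T * E a - E a * T = - ∑ p : κ, M p a • E p := by
    intro a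
    rw [show T * E a - E a * T = - ι Q ⁅e d, e' a⁆ from hTE (e' a)]
    congr 1
    conv_lhs => rw [← dual_expand_e' B e e' hB_symm hB_nondeg h_dual ⁅e d, e' a⁆]
    rw [map_sum]
    exact Finset.sum_congr rfl fun p _ => by rw [map_smul]
  have comm3 : ∀ x y z : CliffordAlgebra Q,
      T * (x * y * z) - (x * y * z) * T
        = (T * x - x * T) * y * z + x * ((T * y - y * T) * z) + x * y * (T * z - z * T) := by
    intro x y z; noncomm_ring
  have step1 :
      T * (∑ a : κ, ∑ b : κ, ∑ c : κ, f a b c • (E a * E b * E c))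
      - (∑ a : κ, ∑ b : κ, ∑ c : κ, f a b c • (E a * E b * E c)) * T
      = - ( (∑ a : κ, ∑ b : κ, ∑ c : κ, ∑ p : κ, (f a b c * M p a) • (E p * (E b * E c)))
          + (∑ a : κ, ∑ b : κ, ∑ c : κ, ∑ p : κ, (f a b c * M p b) • (E a * (E p * E c)))
          + (∑ a : κ, ∑ b : κ, ∑ c : κ, ∑ p : κ, (f a b c * M p c) • (E a * (E b * E p))) ) := by
    rw [Finset.mul_sum, Finset.sum_mul, ← Finset.sum_sub_distrib]
    rw [← Finset.sum_add_distrib, ← Finset.sum_add_distrib, ← Finset.sum_neg_distrib]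
    refine Finset.sum_congr rfl fun a _ => ?_
    rw [Finset.mul_sum, Finset.sum_mul, ← Finset.sum_sub_distrib]
    rw [← Finset.sum_add_distrib, ← Finset.sum_add_distrib, ← Finset.sum_neg_distrib]
    refine Finset.sum_congr rfl fun b _ => ?_
    rw [Finset.mul_sum, Finset.sum_mul, ← Finset.sum_sub_distrib]
    rw [← Finset.sum_add_distrib, ← Finset.sum_add_distrib, ← Finset.sum_neg_distrib]
    refine Finset.sum_congr rfl fun c _ => ?_
    rw [mul_smul_comm, smul_mul_assoc, ← smul_sub, comm3, hTE2 a, hTE2 b, hTE2 c]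
    simp only [neg_mul, mul_neg, Finset.sum_mul, Finset.mul_sum, smul_mul_assoc, mul_smul_comm,
      smul_smul, mul_assoc, smul_neg, smul_add, neg_add, Finset.sum_neg_distrib,
      ← Finset.sum_add_distrib]
    simp only [Finset.smul_sum, smul_smul, ← neg_add, Finset.sum_add_distrib]
  rw [step1, neg_eq_zero]
  have hS1 : (∑ a : κ, ∑ b : κ, ∑ c : κ, ∑ p : κ, (f a b c * M p a) • (E p * (E b * E c)))
      = ∑ x : κ, ∑ y : κ, ∑ z : κ, (∑ a : κ, f a y z * M x a) • (E x * (E y * E z)) := by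
    conv_rhs => enter [2, x, 2, y, 2, z]; rw [Finset.sum_smul]
    conv_lhs => enter [2, a, 2, b]; rw [Finset.sum_comm]     -- [a,b,p,c]
    conv_lhs => enter [2, a]; rw [Finset.sum_comm]            -- [a,p,b,c]
    conv_lhs => rw [Finset.sum_comm]                   -- [p,a,b,c]
    conv_lhs => enter [2, p]; rw [Finset.sum_comm]            -- [p,b,a,c]
    conv_lhs => enter [2, p, 2, b]; rw [Finset.sum_comm]     -- [p,b,c,a]
  have hS2 : (∑ a : κ, ∑ b : κ, ∑ c : κ, ∑ p : κ, (f a b c * M p b) • (E a * (E p * E c)))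
      = ∑ x : κ, ∑ y : κ, ∑ z : κ, (∑ b : κ, f x b z * M y b) • (E x * (E y * E z)) := by
    conv_rhs => enter [2, x, 2, y, 2, z]; rw [Finset.sum_smul]
    conv_lhs => enter [2, a, 2, b]; rw [Finset.sum_comm]     -- [a,b,p,c]
    conv_lhs => enter [2, a]; rw [Finset.sum_comm]            -- [a,p,b,c]
    conv_lhs => enter [2, a, 2, p]; rw [Finset.sum_comm]     -- [a,p,c,b]
  have hS3 : (∑ a : κ, ∑ b : κ, ∑ c : κ, ∑ p : κ, (f a b c * M p c) • (E a * (E b * E p)))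
      = ∑ x : κ, ∑ y : κ, ∑ z : κ, (∑ c : κ, f x y c * M z c) • (E x * (E y * E z)) := by
    conv_rhs => enter [2, x, 2, y, 2, z]; rw [Finset.sum_smul]
    conv_lhs => enter [2, a, 2, b]; rw [Finset.sum_comm]     -- [a,b,p,c]
  rw [hS1, hS2, hS3]
  rw [← Finset.sum_add_distrib, ← Finset.sum_add_distrib]
  refine Finset.sum_eq_zero fun x _ => ?_
  rw [← Finset.sum_add_distrib, ← Finset.sum_add_distrib]
  refine Finset.sum_eq_zero fun y _ => ?_
  rw [← Finset.sum_add_distrib, ← Finset.sum_add_distrib]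
  refine Finset.sum_eq_zero fun z _ => ?_
  rw [← add_smul, ← add_smul]
  have t1 : (∑ a : κ, f a y z * M x a) = B (e x) ⁅e d, ⁅e y, e z⁆⁆ := by
    have : ∀ a : κ, f a y z * M x a = B ⁅e x, e d⁆ (e' a) * (B.flip ⁅e y, e z⁆) (e a) := by
      intro a
      rw [hf, hM, hB_inv, mul_comm]
      rfl
    rw [Finset.sum_congr rfl fun a _ => this a, contract_e B e e' h_dual, LinearMap.flip_apply,
      hB_inv]
  have t2 : (∑ b : κ, f x b z * M y b) = B (e x) ⁅⁅e y, e d⁆, e z⁆ := by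
    have : ∀ b : κ, f x b z * M y b = B ⁅e y, e d⁆ (e' b) * (brkL B (e x) (e z)) (e b) := by
      intro b
      rw [hf, hM, hB_inv, mul_comm]
      rfl
    rw [Finset.sum_congr rfl fun b _ => this b, contract_e B e e' h_dual]
    rfl
  have t3 : (∑ c : κ, f x y c * M z c) = B (e x) ⁅e y, ⁅e z, e d⁆⁆ := by
    have : ∀ c : κ, f x y c * M z c = B ⁅e z, e d⁆ (e' c) * (brkR B (e x) (e y)) (e c) := by
      intro c
      rw [hf, hM, hB_inv, mul_comm]
      rfl
    rw [Finset.sum_congr rfl fun c _ => this c, contract_e B e e' h_dual]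
    rfl
  rw [t1, t2, t3, ← map_add, ← map_add]
  have jac : (⁅e d, ⁅e y, e z⁆⁆ : g) + ⁅⁅e y, e d⁆, e z⁆ + ⁅e y, ⁅e z, e d⁆⁆ = 0 := by
    rw [show (⁅e y, e d⁆ : g) = -⁅e d, e y⁆ from (lie_skew (e y) (e d)).symm,
      show (⁅e z, e d⁆ : g) = -⁅e d, e z⁆ from (lie_skew (e z) (e d)).symm,
      neg_lie, lie_neg, leibniz_lie (e d) (e y) (e z)]
    abel
  rw [jac, map_zero, zero_smul]

theorem c2_central
    (hB_symm : ∀ x y : g, B x y = B y x)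
    (hB_nondeg : ∀ x : g, (∀ y : g, B x y = 0) → x = 0)
    (hB_inv : ∀ x y z : g, B ⁅x, y⁆ z = B x ⁅y, z⁆)
    (h_dual : ∀ a b : κ, B (e a) (e' b) = if a = b then 1 else 0)
    (hQ : ∀ v : g, Q v = (1 / 2 : ℝ) * B v v)
    (hf : ∀ a b c : κ, f a b c = B (e a) ⁅e b, e c⁆)
    (C : CliffordAlgebra Q)
    (hC : C = (1 / 6 : ℝ) •
      ∑ a : κ, ∑ b : κ, ∑ c : κ, f a b c • (ι Q (e' a) * ι Q (e' b) * ι Q (e' c))) :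
    ∀ x : CliffordAlgebra Q, (C * C) * x = x * (C * C) := by
  have hbasis : ∀ d : κ, (C * C) * ι Q (e d) = ι Q (e d) * (C * C) := by
    intro d
    have h6 := anti_C_basis B Q e e' f hB_symm hB_inv h_dual hQ hf d
    have h8 := Td_comm_C B Q e e' f hB_symm hB_nondeg hB_inv h_dual hQ hf d
    set S := ∑ a : κ, ∑ b : κ, ∑ c : κ, f a b c • (ι Q (e' a) * ι Q (e' b) * ι Q (e' c)) with hS
    clear_value S
    set T := (1/2 : ℝ) • ∑ b : κ, ∑ c : κ, f d b c • (ι Q (e' b) * ι Q (e' c)) with hTdef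
    clear_value T
    rw [← hC] at h6
    set D := ι Q (e d) with hD
    clear_value D
    have h8' : T * C - C * T = 0 := by
      rw [hC, mul_smul_comm, smul_mul_assoc, ← smul_sub, h8, smul_zero]
    have expand : (C * C) * D - D * (C * C)
        = C * (C * D + D * C) - (C * D + D * C) * C := by noncomm_ring
    have hz : (C * C) * D - D * (C * C) = 0 := by
      rw [expand, h6, ← neg_sub (T * C) (C * T), h8', neg_zero]
    exact sub_eq_zero.mp hz
  intro x
  induction x using CliffordAlgebra.induction with
  | algebraMap r => exact (Algebra.commutes r (C * C)).symm
  | ι v =>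
    have hv : ι Q v = ∑ a : κ, B v (e' a) • ι Q (e a) := by
      conv_lhs => rw [← dual_expand_e B e e' h_dual v]
      rw [map_sum]
      exact Finset.sum_congr rfl fun a _ => by rw [map_smul]
    rw [hv, Finset.mul_sum, Finset.sum_mul]
    exact Finset.sum_congr rfl fun a _ => by
      rw [mul_smul_comm, smul_mul_assoc, hbasis a]
  | mul a b ha hb => rw [← mul_assoc, ha, mul_assoc, hb, ← mul_assoc]
  | add a b ha hb => rw [mul_add, add_mul, ha, hb]

theorem C_odd (C : CliffordAlgebra Q)
    (hC : C = (1 / 6 : ℝ) •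
      ∑ a : κ, ∑ b : κ, ∑ c : κ, f a b c • (ι Q (e' a) * ι Q (e' b) * ι Q (e' c))) :
    C ∈ evenOdd Q 1 := by
  rw [hC]
  refine Submodule.smul_mem _ _ (Submodule.sum_mem _ fun a _ => Submodule.sum_mem _ fun b _ =>
    Submodule.sum_mem _ fun c _ => Submodule.smul_mem _ _ ?_)
  have h3 : ι Q (e' a) * ι Q (e' b) * ι Q (e' c) ∈ evenOdd Q (1 + 1 + 1) :=
    SetLike.mul_mem_graded (SetLike.mul_mem_graded (ι_mem_evenOdd_one Q (e' a))
      (ι_mem_evenOdd_one Q (e' b))) (ι_mem_evenOdd_one Q (e' c))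
  have : (1 + 1 + 1 : ZMod 2) = 1 := by decide
  rwa [this] at h3

theorem main_final
    (hB_symm : ∀ x y : g, B x y = B y x)
    (hB_nondeg : ∀ x : g, (∀ y : g, B x y = 0) → x = 0)
    (hB_inv : ∀ x y z : g, B ⁅x, y⁆ z = B x ⁅y, z⁆)
    (h_dual : ∀ a b : κ, B (e a) (e' b) = if a = b then 1 else 0)
    (hQ : ∀ v : g, Q v = (1 / 2 : ℝ) * B v v)
    (hf : ∀ a b c : κ, f a b c = B (e a) ⁅e b, e c⁆)
    (C : CliffordAlgebra Q)
    (hC : C = (1 / 6 : ℝ) •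
      ∑ a : κ, ∑ b : κ, ∑ c : κ, f a b c • (ι Q (e' a) * ι Q (e' b) * ι Q (e' c)))
    (δ : CliffordAlgebra Q →ₗ[ℝ] CliffordAlgebra Q)
    (hδ : ∀ (i : ZMod 2), ∀ x ∈ evenOdd Q i,
      δ x = C * x - ((-1 : ℝ) ^ i.val) • (x * C)) :
    ∀ x : CliffordAlgebra Q, δ (δ x) = 0 := by
  have hcent := c2_central B Q e e' f hB_symm hB_nondeg hB_inv h_dual hQ hf C hC
  have hCodd : C ∈ evenOdd Q 1 := C_odd Q e' f C hC
  intro x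
  induction x using DirectSum.Decomposition.inductionOn (evenOdd Q) with
  | zero => simp
  | homogeneous m =>
    rename_i i
    obtain ⟨m, hm⟩ := m
    have h1 : δ m = C * m - ((-1 : ℝ) ^ i.val) • (m * C) := hδ i m hm
    have hmem : C * m - ((-1 : ℝ) ^ i.val) • (m * C) ∈ evenOdd Q (i + 1) := by
      refine Submodule.sub_mem _ ?_ (Submodule.smul_mem _ _ ?_)
      · have := SetLike.mul_mem_graded hCodd hm
        rwa [add_comm] at this
      · exact SetLike.mul_mem_graded hm hCodd
    have hmem' : δ m ∈ evenOdd Q (i + 1) := by rw [h1]; exact hmem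
    have h2 : δ (δ m) = C * (δ m) - ((-1 : ℝ) ^ (i + 1).val) • ((δ m) * C) :=
      hδ (i + 1) _ hmem'
    rw [h2, h1]
    have hi : i = 0 ∨ i = 1 := by
      have : ∀ j : ZMod 2, j = 0 ∨ j = 1 := by decide
      exact this i
    have key : ∀ y : CliffordAlgebra Q,
        C * (C * y - y * C) - (-1 : ℝ) • ((C * y - y * C) * C) = C * C * y - y * (C * C) := by
      intro y
      simp only [neg_smul, one_smul, sub_neg_eq_add]
      noncomm_ring
    have key' : ∀ y : CliffordAlgebra Q,
        C * (C * y - (-1 : ℝ) • (y * C)) - (1 : ℝ) • ((C * y - (-1 : ℝ) • (y * C)) * C)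
          = C * C * y - y * (C * C) := by
      intro y
      simp only [neg_smul, one_smul, sub_neg_eq_add]
      noncomm_ring
    rcases hi with rfl | rfl
    · have v0 : ((0 : ZMod 2)).val = 0 := rfl
      have v1 : ((0 + 1 : ZMod 2)).val = 1 := rfl
      rw [v0, v1, pow_zero, pow_one, one_smul, key m, hcent m, sub_self]
    · have v0 : ((1 : ZMod 2)).val = 1 := rfl
      have v1 : ((1 + 1 : ZMod 2)).val = 0 := rfl
      rw [v0, v1, pow_zero, pow_one, key' m, hcent m, sub_self]
  | add m m' hm hm' => rw [map_add, map_add, hm, hm', add_zero]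

end
end CliffDiffAux

open CliffordAlgebra

theorem clifford_differential_squares_to_zero
    {g : Type*} [LieRing g] [LieAlgebra ℝ g] [FiniteDimensional ℝ g]
    -- the invariant, non-degenerate, symmetric bilinear form B
    (B : g →ₗ[ℝ] g →ₗ[ℝ] ℝ)
    (hB_symm : ∀ x y : g, B x y = B y x)
    (hB_nondeg : ∀ x : g, (∀ y : g, B x y = 0) → x = 0)
    (hB_inv : ∀ x y z : g, B ⁅x, y⁆ z = B x ⁅y, z⁆)
    -- a basis (e_a) and its B-dual basis (e^a)
    {κ : Type*} [Fintype κ] [DecidableEq κ] (e : Module.Basis κ ℝ g) (e' : κ → g)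
    (h_dual : ∀ a b : κ, B (e a) (e' b) = if a = b then 1 else 0)
    -- the Clifford algebra of the quadratic form Q(v) = (1/2)·B(v,v)
    (Q : QuadraticForm ℝ g) (hQ : ∀ v : g, Q v = (1 / 2 : ℝ) * B v v)
    -- the structure constants f_{abc}
    (f : κ → κ → κ → ℝ) (hf : ∀ a b c : κ, f a b c = B (e a) ⁅e b, e c⁆)
    -- the cubic element C
    (C : CliffordAlgebra Q)
    (hC : C = (1 / 6 : ℝ) •
      ∑ a : κ, ∑ b : κ, ∑ c : κ, f a b c • (ι Q (e' a) * ι Q (e' b) * ι Q (e' c)))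
    -- the supercommutator with C, defined on homogeneous elements of the ℤ₂-grading
    -- of Cl(g) and extended linearly
    (δ : CliffordAlgebra Q →ₗ[ℝ] CliffordAlgebra Q)
    (hδ : ∀ (i : ZMod 2), ∀ x ∈ evenOdd Q i,
      δ x = C * x - ((-1 : ℝ) ^ i.val) • (x * C)) :
    ∀ x : CliffordAlgebra Q, δ (δ x) = 0 := by
  exact CliffDiffAux.main_final B Q e e' f hB_symm hB_nondeg hB_inv h_dual hQ hf C hC δ hδ
end

section
/- Let g be a finite-dimensional real quadratic Lie algebra, and let D = Σ_a e_a ⊗ e^a − 1 ⊗ C be the cubic Dirac operator in the noncommutative Weil algebra W(g) = U(g) ⊗ Cl(g). Then D² = (1/2)·Σ_a (e_a·e^a) ⊗ 1 − (1/48)·(Σ_{a,b,c} f_{abc}·f^{abc})·(1 ⊗ 1), where the product e_a·e^a is taken in U(g). -/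
/-!
STATEMENT 2: Let g be a finite-dimensional real quadratic Lie algebra, and let
D = Σ_a e_a ⊗ e^a − 1 ⊗ C be the cubic Dirac operator in the noncommutative Weil algebra
W(g) = U(g) ⊗ Cl(g).  Then
D² = (1/2)·Σ_a (e_a·e^a) ⊗ 1 − (1/48)·(Σ_{a,b,c} f_{abc}·f^{abc})·(1 ⊗ 1),
where the product e_a·e^a is taken in U(g).
-/

open CliffordAlgebra
open scoped TensorProduct

set_option linter.unusedSectionVars false
set_option maxHeartbeats 1000000

namespace CubicDiracAux

section Sums
variable {κ : Type*} [Fintype κ] [DecidableEq κ]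
variable {M : Type*} [AddCommMonoid M]





lemma s3₁₂ (F : κ → κ → κ → M) :
    ∑ a : κ, ∑ b : κ, ∑ c : κ, F a b c = ∑ a : κ, ∑ b : κ, ∑ c : κ, F b a c :=
  Finset.sum_comm

lemma s3₂₃ (F : κ → κ → κ → M) :
    ∑ a : κ, ∑ b : κ, ∑ c : κ, F a b c = ∑ a : κ, ∑ b : κ, ∑ c : κ, F a c b :=
  Finset.sum_congr rfl fun _ _ => Finset.sum_comm

/-- rotate: rename letters by the cycle a↦b↦c↦a, i.e. summand F b c a -/
lemma s3_cycle (F : κ → κ → κ → M) :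
    ∑ a : κ, ∑ b : κ, ∑ c : κ, F a b c = ∑ a : κ, ∑ b : κ, ∑ c : κ, F b c a := by
  calc ∑ a : κ, ∑ b : κ, ∑ c : κ, F a b c
      = ∑ a : κ, ∑ b : κ, ∑ c : κ, F a c b := s3₂₃ F
    _ = ∑ a : κ, ∑ b : κ, ∑ c : κ, F b c a := s3₁₂ (fun a b c => F a c b)

lemma s3_cycle' (F : κ → κ → κ → M) :
    ∑ a : κ, ∑ b : κ, ∑ c : κ, F a b c = ∑ a : κ, ∑ b : κ, ∑ c : κ, F c a b := by
  calc ∑ a : κ, ∑ b : κ, ∑ c : κ, F a b c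
      = ∑ a : κ, ∑ b : κ, ∑ c : κ, F b a c := s3₁₂ F
    _ = ∑ a : κ, ∑ b : κ, ∑ c : κ, F c a b := s3₂₃ (fun a b c => F b a c)

lemma s4₁₂ (F : κ → κ → κ → κ → M) :
    ∑ a : κ, ∑ b : κ, ∑ c : κ, ∑ d : κ, F a b c d
      = ∑ a : κ, ∑ b : κ, ∑ c : κ, ∑ d : κ, F b a c d :=
  Finset.sum_comm

lemma s4₂₃ (F : κ → κ → κ → κ → M) :
    ∑ a : κ, ∑ b : κ, ∑ c : κ, ∑ d : κ, F a b c d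
      = ∑ a : κ, ∑ b : κ, ∑ c : κ, ∑ d : κ, F a c b d :=
  Finset.sum_congr rfl fun _ _ => Finset.sum_comm

lemma s4₃₄ (F : κ → κ → κ → κ → M) :
    ∑ a : κ, ∑ b : κ, ∑ c : κ, ∑ d : κ, F a b c d
      = ∑ a : κ, ∑ b : κ, ∑ c : κ, ∑ d : κ, F a b d c :=
  Finset.sum_congr rfl fun _ _ => Finset.sum_congr rfl fun _ _ => Finset.sum_comm

/-- swap the two pairs of letters: (c,d) on first two positions -/
lemma s4_swap_pairs (F : κ → κ → κ → κ → M) :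
    ∑ a : κ, ∑ b : κ, ∑ c : κ, ∑ d : κ, F a b c d
      = ∑ a : κ, ∑ b : κ, ∑ c : κ, ∑ d : κ, F c d a b := by
  calc ∑ a : κ, ∑ b : κ, ∑ c : κ, ∑ d : κ, F a b c d
      = ∑ a : κ, ∑ b : κ, ∑ c : κ, ∑ d : κ, F b a c d := s4₁₂ F
    _ = ∑ a : κ, ∑ b : κ, ∑ c : κ, ∑ d : κ, F c a b d := s4₂₃ _
    _ = ∑ a : κ, ∑ b : κ, ∑ c : κ, ∑ d : κ, F c b a d := s4₁₂ _
    _ = ∑ a : κ, ∑ b : κ, ∑ c : κ, ∑ d : κ, F b c a d := s4₂₃ _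
    _ = ∑ a : κ, ∑ b : κ, ∑ c : κ, ∑ d : κ, F b d a c := s4₃₄ _
    _ = ∑ a : κ, ∑ b : κ, ∑ c : κ, ∑ d : κ, F c d a b := s4₂₃ _

/-- both transpositions (a b) and (c d) -/
lemma s4_double (F : κ → κ → κ → κ → M) :
    ∑ a : κ, ∑ b : κ, ∑ c : κ, ∑ d : κ, F a b c d
      = ∑ a : κ, ∑ b : κ, ∑ c : κ, ∑ d : κ, F b a d c := by
  calc ∑ a : κ, ∑ b : κ, ∑ c : κ, ∑ d : κ, F a b c d
      = ∑ a : κ, ∑ b : κ, ∑ c : κ, ∑ d : κ, F b a c d := s4₁₂ F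
    _ = ∑ a : κ, ∑ b : κ, ∑ c : κ, ∑ d : κ, F b a d c := s4₃₄ _

/-- letters cycle b ↦ c ↦ d ↦ b (summand F a c d b) -/
lemma s4_cycA (F : κ → κ → κ → κ → M) :
    ∑ a : κ, ∑ b : κ, ∑ c : κ, ∑ d : κ, F a b c d
      = ∑ a : κ, ∑ b : κ, ∑ c : κ, ∑ d : κ, F a c d b := by
  calc ∑ a : κ, ∑ b : κ, ∑ c : κ, ∑ d : κ, F a b c d
      = ∑ a : κ, ∑ b : κ, ∑ c : κ, ∑ d : κ, F a b d c := s4₃₄ F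
    _ = ∑ a : κ, ∑ b : κ, ∑ c : κ, ∑ d : κ, F a c d b := s4₂₃ _

/-- letters cycle b ↦ d ↦ c ↦ b (summand F a d b c) -/
lemma s4_cycB (F : κ → κ → κ → κ → M) :
    ∑ a : κ, ∑ b : κ, ∑ c : κ, ∑ d : κ, F a b c d
      = ∑ a : κ, ∑ b : κ, ∑ c : κ, ∑ d : κ, F a d b c := by
  calc ∑ a : κ, ∑ b : κ, ∑ c : κ, ∑ d : κ, F a b c d
      = ∑ a : κ, ∑ b : κ, ∑ c : κ, ∑ d : κ, F a c b d := s4₂₃ F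
    _ = ∑ a : κ, ∑ b : κ, ∑ c : κ, ∑ d : κ, F a d b c := s4₃₄ _

/-- rotate a to innermost -/
lemma s3_rot (F : κ → κ → κ → M) :
    ∑ a : κ, ∑ b : κ, ∑ c : κ, F a b c = ∑ b : κ, ∑ c : κ, ∑ a : κ, F a b c := by
  rw [Finset.sum_comm]
  exact Finset.sum_congr rfl fun _ _ => Finset.sum_comm


end Sums

section Quad
variable {g : Type*} [AddCommGroup g] [Module ℝ g]
variable {κ : Type*} [Fintype κ] [DecidableEq κ]
variable (B : g →ₗ[ℝ] g →ₗ[ℝ] ℝ) (Q : QuadraticForm ℝ g)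





/-- basic swap relation -/
lemma swap2 (hB_symm : ∀ x y : g, B x y = B y x)
    (hQ : ∀ v : g, Q v = (1 / 2 : ℝ) * B v v) (x y : g) :
    ι Q x * ι Q y = B x y • (1 : CliffordAlgebra Q) - ι Q y * ι Q x := by
  have h := ι_mul_ι_comm (Q := Q) x y
  have hpolar : QuadraticMap.polar Q x y = B x y := by
    simp only [QuadraticMap.polar, hQ, map_add, LinearMap.add_apply]
    have := hB_symm x y
    ring_nf
    linarith
  rw [h, hpolar, Algebra.algebraMap_eq_smul_one]

lemma swap3 (hB_symm : ∀ x y : g, B x y = B y x)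
    (hQ : ∀ v : g, Q v = (1 / 2 : ℝ) * B v v) (x y z : g) :
    ι Q x * ι Q y * ι Q z = ι Q y * ι Q z * ι Q x
      + B x y • ι Q z - B x z • ι Q y := by
  rw [swap2 B Q hB_symm hQ x y, sub_mul, smul_mul_assoc, one_mul,
    mul_assoc, swap2 B Q hB_symm hQ x z, mul_sub, mul_smul_comm, mul_one,
    ← mul_assoc]
  abel

lemma swap4 (hB_symm : ∀ x y : g, B x y = B y x)
    (hQ : ∀ v : g, Q v = (1 / 2 : ℝ) * B v v) (x y z w : g) :
    ι Q x * ι Q y * ι Q z * ι Q w = ι Q z * ι Q w * ι Q x * ι Q y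
      + B x z • (ι Q w * ι Q y) - B x w • (ι Q z * ι Q y)
      + B y z • (ι Q x * ι Q w) - B y w • (ι Q x * ι Q z) := by
  have hyz := swap2 B Q hB_symm hQ y z
  have hyw := swap2 B Q hB_symm hQ y w
  calc ι Q x * ι Q y * ι Q z * ι Q w
      = ι Q x * (ι Q y * ι Q z) * ι Q w := by rw [mul_assoc (ι Q x) (ι Q y) (ι Q z)]
    _ = ι Q x * (B y z • 1 - ι Q z * ι Q y) * ι Q w := by rw [hyz]
    _ = B y z • (ι Q x * ι Q w) - ι Q x * ι Q z * (ι Q y * ι Q w) := by noncomm_ring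
    _ = B y z • (ι Q x * ι Q w) - ι Q x * ι Q z * (B y w • 1 - ι Q w * ι Q y) := by rw [hyw]
    _ = B y z • (ι Q x * ι Q w) - B y w • (ι Q x * ι Q z)
        + (ι Q x * ι Q z * ι Q w) * ι Q y := by noncomm_ring
    _ = B y z • (ι Q x * ι Q w) - B y w • (ι Q x * ι Q z)
        + (ι Q z * ι Q w * ι Q x + B x z • ι Q w - B x w • ι Q z) * ι Q y := by
          rw [swap3 B Q hB_symm hQ x z w]
    _ = ι Q z * ι Q w * ι Q x * ι Q y
      + B x z • (ι Q w * ι Q y) - B x w • (ι Q z * ι Q y)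
      + B y z • (ι Q x * ι Q w) - B y w • (ι Q x * ι Q z) := by noncomm_ring

/-- anticommutator of a vector with a cubic monomial -/
lemma anti3 (hB_symm : ∀ x y : g, B x y = B y x)
    (hQ : ∀ v : g, Q v = (1 / 2 : ℝ) * B v v) (x v1 v2 v3 : g) :
    ι Q x * (ι Q v1 * ι Q v2 * ι Q v3) + (ι Q v1 * ι Q v2 * ι Q v3) * ι Q x
      = B x v1 • (ι Q v2 * ι Q v3) - B x v2 • (ι Q v1 * ι Q v3)
        + B x v3 • (ι Q v1 * ι Q v2) := by
  have h1 := swap2 B Q hB_symm hQ x v1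
  have h2 := swap2 B Q hB_symm hQ x v2
  have h3 := swap2 B Q hB_symm hQ x v3
  calc ι Q x * (ι Q v1 * ι Q v2 * ι Q v3) + (ι Q v1 * ι Q v2 * ι Q v3) * ι Q x
      = (ι Q x * ι Q v1) * (ι Q v2 * ι Q v3) + ι Q v1 * ι Q v2 * ι Q v3 * ι Q x := by
        noncomm_ring
    _ = B x v1 • (ι Q v2 * ι Q v3) - ι Q v1 * ((ι Q x * ι Q v2) * ι Q v3)
          + ι Q v1 * ι Q v2 * ι Q v3 * ι Q x := by
        rw [h1]; noncomm_ring
    _ = B x v1 • (ι Q v2 * ι Q v3) - B x v2 • (ι Q v1 * ι Q v3)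
          + ι Q v1 * ι Q v2 * (ι Q x * ι Q v3) + ι Q v1 * ι Q v2 * ι Q v3 * ι Q x := by
        rw [h2]; simp only [sub_mul, smul_mul_assoc, one_mul, mul_sub, mul_smul_comm]
        noncomm_ring
    _ = B x v1 • (ι Q v2 * ι Q v3) - B x v2 • (ι Q v1 * ι Q v3)
        + B x v3 • (ι Q v1 * ι Q v2) := by
        rw [h3]; simp only [mul_sub, mul_smul_comm, mul_one]
        noncomm_ring







/-- x = ∑ B x (e a) • e' a -/
lemma expandE' (e : Module.Basis κ ℝ g) (e' : κ → g)
    (hB_symm : ∀ x y : g, B x y = B y x)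
    (hB_nondeg : ∀ x : g, (∀ y : g, B x y = 0) → x = 0)
    (h_dual : ∀ a b : κ, B (e a) (e' b) = if a = b then 1 else 0) (x : g) :
    ∑ a : κ, B x (e a) • e' a = x := by
  have hzero : ∀ z : g, (∀ b : κ, B z (e b) = 0) → z = 0 := by
    intro z hz
    apply hB_nondeg
    intro y
    have hy : (∑ i : κ, e.repr y i • e i) = y := e.sum_repr y
    rw [← hy, map_sum]
    simp only [map_smul, smul_eq_mul]
    exact Finset.sum_eq_zero fun i _ => by rw [hz i, mul_zero]
  have key : ∀ b : κ, B ((∑ a : κ, B x (e a) • e' a) - x) (e b) = 0 := by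
    intro b
    rw [map_sub, LinearMap.sub_apply, map_sum, LinearMap.sum_apply]
    have : ∀ a : κ, (B (B x (e a) • e' a)) (e b) = (if b = a then 1 else 0) * B x (e a) := by
      intro a
      rw [map_smul, LinearMap.smul_apply, smul_eq_mul, hB_symm (e' a) (e b), h_dual]
      ring
    rw [Finset.sum_congr rfl fun a _ => this a]
    simp [Finset.sum_ite_eq]
  have := hzero _ key
  rwa [sub_eq_zero] at this

/-- x = ∑ B x (e' a) • e a -/
lemma expandE (e : Module.Basis κ ℝ g) (e' : κ → g)
    (hB_symm : ∀ x y : g, B x y = B y x)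
    (hB_nondeg : ∀ x : g, (∀ y : g, B x y = 0) → x = 0)
    (h_dual : ∀ a b : κ, B (e a) (e' b) = if a = b then 1 else 0) (x : g) :
    ∑ a : κ, B x (e' a) • e a = x := by
  apply sub_eq_zero.mp
  apply hB_nondeg
  intro y
  rw [map_sub, LinearMap.sub_apply, map_sum, LinearMap.sum_apply]
  have h1 : ∀ a : κ, (B (B x (e' a) • e a)) y = B y (e a) * B x (e' a) := by
    intro a
    rw [map_smul, LinearMap.smul_apply, smul_eq_mul, hB_symm (e a) y]
    ring
  rw [Finset.sum_congr rfl fun a _ => h1 a]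
  have h2 : ∑ a : κ, B y (e a) * B x (e' a) = B x (∑ a : κ, B y (e a) • e' a) := by
    rw [map_sum]
    exact Finset.sum_congr rfl fun a _ => by rw [map_smul, smul_eq_mul]
  rw [h2, expandE' B e e' hB_symm hB_nondeg h_dual y, hB_symm x y, sub_self]

/-- contraction: ∑ₐ B X (e a) * B (e' a) Y = B X Y -/
lemma contract1 (e : Module.Basis κ ℝ g) (e' : κ → g)
    (hB_symm : ∀ x y : g, B x y = B y x)
    (hB_nondeg : ∀ x : g, (∀ y : g, B x y = 0) → x = 0)
    (h_dual : ∀ a b : κ, B (e a) (e' b) = if a = b then 1 else 0) (X Y : g) :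
    ∑ a : κ, B X (e a) * B (e' a) Y = B X Y := by
  have h : ∀ a : κ, B X (e a) * B (e' a) Y = (B ((B X (e a)) • e' a)) Y := by
    intro a; rw [map_smul, LinearMap.smul_apply, smul_eq_mul]
  rw [Finset.sum_congr rfl fun a _ => h a, ← LinearMap.sum_apply, ← map_sum,
    expandE' B e e' hB_symm hB_nondeg h_dual X]

/-- contraction: ∑ₐ B X (e' a) * B (e a) Y = B X Y -/
lemma contract2 (e : Module.Basis κ ℝ g) (e' : κ → g)
    (hB_symm : ∀ x y : g, B x y = B y x)
    (hB_nondeg : ∀ x : g, (∀ y : g, B x y = 0) → x = 0)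
    (h_dual : ∀ a b : κ, B (e a) (e' b) = if a = b then 1 else 0) (X Y : g) :
    ∑ a : κ, B X (e' a) * B (e a) Y = B X Y := by
  have h : ∀ a : κ, B X (e' a) * B (e a) Y = (B ((B X (e' a)) • e a)) Y := by
    intro a; rw [map_smul, LinearMap.smul_apply, smul_eq_mul]
  rw [Finset.sum_congr rfl fun a _ => h a, ← LinearMap.sum_apply, ← map_sum,
    expandE B e e' hB_symm hB_nondeg h_dual X]


end Quad

section Lie
variable {g : Type*} [LieRing g] [LieAlgebra ℝ g]
variable {κ : Type*} [Fintype κ] [DecidableEq κ]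
variable (B : g →ₗ[ℝ] g →ₗ[ℝ] ℝ) (Q : QuadraticForm ℝ g)

/-- cyclic invariance -/
lemma Bcyc (hB_symm : ∀ x y : g, B x y = B y x)
    (hB_inv : ∀ x y z : g, B ⁅x, y⁆ z = B x ⁅y, z⁆) (x y z : g) :
    B x ⁅y, z⁆ = B z ⁅x, y⁆ := by
  rw [← hB_inv, hB_symm]

lemma Bswap (hB_symm : ∀ x y : g, B x y = B y x)
    (hB_inv : ∀ x y z : g, B ⁅x, y⁆ z = B x ⁅y, z⁆) (x y z : g) :
    B y ⁅x, z⁆ = - B x ⁅y, z⁆ := by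
  rw [← lie_skew, map_neg, Bcyc B hB_symm hB_inv y z x, Bcyc B hB_symm hB_inv x y z]

/-- the anticommutator of a vector with the (un-normalized) cubic element -/
lemma crossS3 (hB_symm : ∀ x y : g, B x y = B y x)
    (hB_nondeg : ∀ x : g, (∀ y : g, B x y = 0) → x = 0)
    (hB_inv : ∀ x y z : g, B ⁅x, y⁆ z = B x ⁅y, z⁆)
    (e : Module.Basis κ ℝ g) (e' : κ → g)
    (h_dual : ∀ a b : κ, B (e a) (e' b) = if a = b then 1 else 0)
    (hQ : ∀ v : g, Q v = (1 / 2 : ℝ) * B v v) (x : g) :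
    ι Q x * (∑ a : κ, ∑ b : κ, ∑ c : κ,
        B (e a) ⁅e b, e c⁆ • (ι Q (e' a) * ι Q (e' b) * ι Q (e' c)))
      + (∑ a : κ, ∑ b : κ, ∑ c : κ,
        B (e a) ⁅e b, e c⁆ • (ι Q (e' a) * ι Q (e' b) * ι Q (e' c))) * ι Q x
    = (3 : ℝ) • ∑ b : κ, ∑ c : κ, B x ⁅e b, e c⁆ • (ι Q (e' b) * ι Q (e' c)) := by
  set ψ : κ → CliffordAlgebra Q := fun a => ι Q (e' a) with hψ
  have step1 : ι Q x * (∑ a : κ, ∑ b : κ, ∑ c : κ,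
        B (e a) ⁅e b, e c⁆ • (ψ a * ψ b * ψ c))
      + (∑ a : κ, ∑ b : κ, ∑ c : κ, B (e a) ⁅e b, e c⁆ • (ψ a * ψ b * ψ c)) * ι Q x
      = ∑ a : κ, ∑ b : κ, ∑ c : κ, B (e a) ⁅e b, e c⁆ •
          (ι Q x * (ψ a * ψ b * ψ c) + (ψ a * ψ b * ψ c) * ι Q x) := by
    simp only [Finset.mul_sum, Finset.sum_mul, mul_smul_comm, smul_mul_assoc,
      ← Finset.sum_add_distrib, ← smul_add]
  rw [step1]
  have step2 : ∀ a b c : κ, B (e a) ⁅e b, e c⁆ •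
          (ι Q x * (ψ a * ψ b * ψ c) + (ψ a * ψ b * ψ c) * ι Q x)
      = (B (e a) ⁅e b, e c⁆ * B x (e' a)) • (ψ b * ψ c)
        - (B (e a) ⁅e b, e c⁆ * B x (e' b)) • (ψ a * ψ c)
        + (B (e a) ⁅e b, e c⁆ * B x (e' c)) • (ψ a * ψ b) := by
    intro a b c
    simp only [hψ]
    rw [anti3 B Q hB_symm hQ x (e' a) (e' b) (e' c)]
    simp only [smul_add, smul_sub, smul_smul]
  rw [Finset.sum_congr rfl fun a _ => Finset.sum_congr rfl fun b _ =>
    Finset.sum_congr rfl fun c _ => step2 a b c]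
  simp only [Finset.sum_add_distrib, Finset.sum_sub_distrib]
  have key : ∀ G : κ → κ → CliffordAlgebra Q,
      (∑ b : κ, ∑ c : κ, ∑ a : κ, (B (e a) ⁅e b, e c⁆ * B x (e' a)) • G b c)
        = ∑ b : κ, ∑ c : κ, B x ⁅e b, e c⁆ • G b c := by
    intro G
    refine Finset.sum_congr rfl fun b _ => Finset.sum_congr rfl fun c _ => ?_
    rw [← Finset.sum_smul]
    congr 1
    rw [Finset.sum_congr rfl fun a _ => mul_comm (B (e a) ⁅e b, e c⁆) (B x (e' a))]
    exact contract2 B e e' hB_symm hB_nondeg h_dual x ⁅e b, e c⁆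
  have h1 : (∑ a : κ, ∑ b : κ, ∑ c : κ, (B (e a) ⁅e b, e c⁆ * B x (e' a)) • (ψ b * ψ c))
      = ∑ b : κ, ∑ c : κ, B x ⁅e b, e c⁆ • (ψ b * ψ c) := by
    rw [s3_rot (fun a b c => (B (e a) ⁅e b, e c⁆ * B x (e' a)) • (ψ b * ψ c))]
    exact key _
  have h2 : (∑ a : κ, ∑ b : κ, ∑ c : κ, (B (e a) ⁅e b, e c⁆ * B x (e' b)) • (ψ a * ψ c))
      = - ∑ b : κ, ∑ c : κ, B x ⁅e b, e c⁆ • (ψ b * ψ c) := by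
    rw [s3₁₂ (fun a b c => (B (e a) ⁅e b, e c⁆ * B x (e' b)) • (ψ a * ψ c))]
    have : ∀ a b c : κ, (B (e b) ⁅e a, e c⁆ * B x (e' a)) • (ψ b * ψ c)
        = - ((B (e a) ⁅e b, e c⁆ * B x (e' a)) • (ψ b * ψ c)) := by
      intro a b c
      rw [Bswap B hB_symm hB_inv (e a) (e b) (e c), neg_mul, neg_smul]
    rw [Finset.sum_congr rfl fun a _ => Finset.sum_congr rfl fun b _ =>
      Finset.sum_congr rfl fun c _ => this a b c]
    simp only [Finset.sum_neg_distrib]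
    rw [neg_inj]
    rw [s3_rot (fun a b c => (B (e a) ⁅e b, e c⁆ * B x (e' a)) • (ψ b * ψ c))]
    exact key _
  have h3 : (∑ a : κ, ∑ b : κ, ∑ c : κ, (B (e a) ⁅e b, e c⁆ * B x (e' c)) • (ψ a * ψ b))
      = ∑ b : κ, ∑ c : κ, B x ⁅e b, e c⁆ • (ψ b * ψ c) := by
    rw [s3_cycle (fun a b c => (B (e a) ⁅e b, e c⁆ * B x (e' c)) • (ψ a * ψ b))]
    have : ∀ a b c : κ, (B (e b) ⁅e c, e a⁆ * B x (e' a)) • (ψ b * ψ c)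
        = (B (e a) ⁅e b, e c⁆ * B x (e' a)) • (ψ b * ψ c) := by
      intro a b c
      rw [Bcyc B hB_symm hB_inv (e b) (e c) (e a)]
    rw [Finset.sum_congr rfl fun a _ => Finset.sum_congr rfl fun b _ =>
      Finset.sum_congr rfl fun c _ => this a b c]
    rw [s3_rot (fun a b c => (B (e a) ⁅e b, e c⁆ * B x (e' a)) • (ψ b * ψ c))]
    exact key _
  rw [h1, h2, h3]
  have : (3:ℝ) • ∑ b : κ, ∑ c : κ, B x ⁅e b, e c⁆ • (ψ b * ψ c)
      = (∑ b : κ, ∑ c : κ, B x ⁅e b, e c⁆ • (ψ b * ψ c))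
        + (∑ b : κ, ∑ c : κ, B x ⁅e b, e c⁆ • (ψ b * ψ c))
        + (∑ b : κ, ∑ c : κ, B x ⁅e b, e c⁆ • (ψ b * ψ c)) := by
    rw [show (3:ℝ) = 1+1+1 by norm_num, add_smul, add_smul, one_smul]
  rw [this]
  abel

end Lie

section Master

variable {κ : Type*} [Fintype κ]
variable {A : Type*} [Ring A] [Algebra ℝ A]

/-- generic triple swap, from the pair relation -/
lemma g3 (x y z : A) (a b : ℝ)
    (hxy : x * y = a • 1 - y * x) (hxz : x * z = b • 1 - z * x) :
    x * y * z = y * z * x + a • z - b • y := by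
  rw [hxy, sub_mul, smul_mul_assoc, one_mul, mul_assoc, hxz, mul_sub, mul_smul_comm,
    mul_one, ← mul_assoc]
  abel

/-- generic quadruple swap -/
lemma g4 (x y z w : A) (axz axw ayz ayw : ℝ)
    (hxz : x * z = axz • 1 - z * x) (hxw : x * w = axw • 1 - w * x)
    (hyz : y * z = ayz • 1 - z * y) (hyw : y * w = ayw • 1 - w * y) :
    x * y * z * w = z * w * x * y
      + axz • (w * y) - axw • (z * y) + ayz • (x * w) - ayw • (x * z) := by
  calc x * y * z * w
      = x * (y * z) * w := by rw [mul_assoc x y z]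
    _ = x * (ayz • 1 - z * y) * w := by rw [hyz]
    _ = ayz • (x * w) - x * z * (y * w) := by noncomm_ring
    _ = ayz • (x * w) - x * z * (ayw • 1 - w * y) := by rw [hyw]
    _ = ayz • (x * w) - ayw • (x * z) + (x * z * w) * y := by noncomm_ring
    _ = ayz • (x * w) - ayw • (x * z)
        + (z * w * x + axz • w - axw • z) * y := by rw [g3 x z w axz axw hxz hxw]
    _ = z * w * x * y + axz • (w * y) - axw • (z * y)
        + ayz • (x * w) - ayw • (x * z) := by noncomm_ring

lemma ganti3 (c x1 x2 x3 : A) :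
    c * (x1 * x2 * x3) + (x1 * x2 * x3) * c
      = (c * x1 + x1 * c) * x2 * x3 - x1 * (c * x2 + x2 * c) * x3
        + x1 * x2 * (c * x3 + x3 * c) := by noncomm_ring

variable [DecidableEq κ]

/-- the master quartic computation -/
lemma quarticMaster (ψ : κ → A) (K : κ → κ → κ → κ → ℝ) (G : κ → κ → ℝ)
    (hGs : ∀ a b, G a b = G b a)
    (hsw : ∀ a b, ψ a * ψ b = G a b • 1 - ψ b * ψ a)
    (hK1 : ∀ a b c d, K b a c d = -K a b c d)
    (hK2 : ∀ a b c d, K a b d c = -K a b c d)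
    (hKs : ∀ a b c d, K a b c d = K c d a b)
    (hKj : ∀ a b c d, K a b c d + K a c d b + K a d b c = 0) :
    (∑ a : κ, ∑ b : κ, ∑ c : κ, ∑ d : κ, K a b c d •
        (ψ c * ψ d * ψ a * ψ b + ψ a * ψ c * ψ d * ψ b + ψ a * ψ b * ψ c * ψ d))
      = (-(1/2 : ℝ) *
          ∑ a : κ, ∑ b : κ, ∑ c : κ, ∑ d : κ, K a b c d * G a c * G b d) • 1 := by
  set W : A := ∑ a : κ, ∑ b : κ, ∑ c : κ, ∑ d : κ, K a b c d • (ψ c * ψ d * ψ a * ψ b)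
    with hW
  set T : A := ∑ a : κ, ∑ b : κ, ∑ c : κ, ∑ d : κ, (K a b c d * G a c) • (ψ d * ψ b)
    with hT
  set s : ℝ := ∑ a : κ, ∑ b : κ, ∑ c : κ, ∑ d : κ, K a b c d * G a c * G b d with hs
  -- r1 : the (a d)-contraction
  have r1 : (∑ a : κ, ∑ b : κ, ∑ c : κ, ∑ d : κ, (K a b c d * G a d) • (ψ c * ψ b)) = -T := by
    rw [s4₃₄ (fun a b c d => (K a b c d * G a d) • (ψ c * ψ b))]
    have : ∀ a b c d : κ, (K a b d c * G a c) • (ψ d * ψ b)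
        = -((K a b c d * G a c) • (ψ d * ψ b)) := by
      intro a b c d; rw [hK2, neg_mul, neg_smul]
    rw [Finset.sum_congr rfl fun a _ => Finset.sum_congr rfl fun b _ =>
      Finset.sum_congr rfl fun c _ => Finset.sum_congr rfl fun d _ => this a b c d]
    simp only [Finset.sum_neg_distrib, hT]
  -- r2 : wrong-order pair
  have r2 : (∑ a : κ, ∑ b : κ, ∑ c : κ, ∑ d : κ, (K a b c d * G a c) • (ψ b * ψ d))
      = s • (1:A) - T := by
    have : ∀ a b c d : κ, (K a b c d * G a c) • (ψ b * ψ d)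
        = (K a b c d * G a c * G b d) • (1:A) - ((K a b c d * G a c) • (ψ d * ψ b)) := by
      intro a b c d; rw [hsw b d, smul_sub, smul_smul]
    rw [Finset.sum_congr rfl fun a _ => Finset.sum_congr rfl fun b _ =>
      Finset.sum_congr rfl fun c _ => Finset.sum_congr rfl fun d _ => this a b c d]
    simp only [Finset.sum_sub_distrib, ← Finset.sum_smul, hT, hs]
  -- r3
  have r3 : (∑ a : κ, ∑ b : κ, ∑ c : κ, ∑ d : κ, (K a b c d * G b c) • (ψ a * ψ d))
      = T - s • (1:A) := by
    rw [s4₁₂ (fun a b c d => (K a b c d * G b c) • (ψ a * ψ d))]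
    have : ∀ a b c d : κ, (K b a c d * G a c) • (ψ b * ψ d)
        = -((K a b c d * G a c) • (ψ b * ψ d)) := by
      intro a b c d; rw [hK1, neg_mul, neg_smul]
    rw [Finset.sum_congr rfl fun a _ => Finset.sum_congr rfl fun b _ =>
      Finset.sum_congr rfl fun c _ => Finset.sum_congr rfl fun d _ => this a b c d]
    simp only [Finset.sum_neg_distrib]
    rw [r2]; abel
  -- r4
  have r4 : (∑ a : κ, ∑ b : κ, ∑ c : κ, ∑ d : κ, (K a b c d * G b d) • (ψ a * ψ c))
      = s • (1:A) - T := by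
    rw [s4_double (fun a b c d => (K a b c d * G b d) • (ψ a * ψ c))]
    have : ∀ a b c d : κ, (K b a d c * G a c) • (ψ b * ψ d)
        = (K a b c d * G a c) • (ψ b * ψ d) := by
      intro a b c d; rw [hK1, hK2, neg_neg]
    rw [Finset.sum_congr rfl fun a _ => Finset.sum_congr rfl fun b _ =>
      Finset.sum_congr rfl fun c _ => Finset.sum_congr rfl fun d _ => this a b c d]
    exact r2
  -- r5 : Z = 0
  have r5 : (∑ a : κ, ∑ b : κ, ∑ c : κ, ∑ d : κ, (K a b c d * G a b) • (ψ c * ψ d))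
      = 0 := by
    have h : (∑ a : κ, ∑ b : κ, ∑ c : κ, ∑ d : κ, (K a b c d * G a b) • (ψ c * ψ d))
        = -(∑ a : κ, ∑ b : κ, ∑ c : κ, ∑ d : κ, (K a b c d * G a b) • (ψ c * ψ d)) := by
      nth_rewrite 1 [s4₁₂ (fun a b c d => (K a b c d * G a b) • (ψ c * ψ d))]
      have : ∀ a b c d : κ, (K b a c d * G b a) • (ψ c * ψ d)
          = -((K a b c d * G a b) • (ψ c * ψ d)) := by
        intro a b c d; rw [hK1, hGs b a, neg_mul, neg_smul]
      rw [Finset.sum_congr rfl fun a _ => Finset.sum_congr rfl fun b _ =>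
        Finset.sum_congr rfl fun c _ => Finset.sum_congr rfl fun d _ => this a b c d]
      simp only [Finset.sum_neg_distrib]
    linear_combination (norm := module) (1/2 : ℝ) • h
  -- T5 : the remaining contraction
  have rT5 : (∑ a : κ, ∑ b : κ, ∑ c : κ, ∑ d : κ, (K a b c d * G b d) • (ψ c * ψ a)) = T := by
    rw [s4_double (fun a b c d => (K a b c d * G b d) • (ψ c * ψ a))]
    have : ∀ a b c d : κ, (K b a d c * G a c) • (ψ d * ψ b)
        = (K a b c d * G a c) • (ψ d * ψ b) := by
      intro a b c d; rw [hK1, hK2, neg_neg]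
    rw [Finset.sum_congr rfl fun a _ => Finset.sum_congr rfl fun b _ =>
      Finset.sum_congr rfl fun c _ => Finset.sum_congr rfl fun d _ => this a b c d]
  -- pointwise quartic reductions
  have w1 : ∀ a b c d : κ, ψ c * ψ a * ψ d * ψ b
      = G a d • (ψ c * ψ b) - ψ c * ψ d * ψ a * ψ b := by
    intro a b c d
    rw [mul_assoc (ψ c) (ψ a) (ψ d), hsw a d]
    noncomm_ring
  have w2 : ∀ a b c d : κ, ψ c * ψ a * ψ b * ψ d
      = G b d • (ψ c * ψ a) - G a d • (ψ c * ψ b) + ψ c * ψ d * ψ a * ψ b := by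
    intro a b c d
    rw [mul_assoc (ψ c * ψ a) (ψ b) (ψ d), hsw b d, mul_sub, mul_smul_comm, mul_one,
      ← mul_assoc (ψ c * ψ a) (ψ d) (ψ b), w1 a b c d]
    noncomm_ring
  have hm2 : ∀ a b c d : κ, ψ a * ψ c * ψ d * ψ b
      = ψ c * ψ d * ψ a * ψ b + G a c • (ψ d * ψ b) - G a d • (ψ c * ψ b) := by
    intro a b c d
    have := g3 (ψ a) (ψ c) (ψ d) (G a c) (G a d) (hsw a c) (hsw a d)
    calc ψ a * ψ c * ψ d * ψ b
        = (ψ c * ψ d * ψ a + G a c • ψ d - G a d • ψ c) * ψ b := by rw [this]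
      _ = ψ c * ψ d * ψ a * ψ b + G a c • (ψ d * ψ b) - G a d • (ψ c * ψ b) := by
          noncomm_ring
  have hm3 : ∀ a b c d : κ, ψ a * ψ b * ψ c * ψ d
      = ψ c * ψ d * ψ a * ψ b + G a c • (ψ d * ψ b) - G a d • (ψ c * ψ b)
        + G b c • (ψ a * ψ d) - G b d • (ψ a * ψ c) :=
    fun a b c d => g4 (ψ a) (ψ b) (ψ c) (ψ d) _ _ _ _
      (hsw a c) (hsw a d) (hsw b c) (hsw b d)
  -- sum of middle ordering
  have rM : (∑ a : κ, ∑ b : κ, ∑ c : κ, ∑ d : κ, K a b c d • (ψ a * ψ c * ψ d * ψ b))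
      = W + T + T := by
    have : ∀ a b c d : κ, K a b c d • (ψ a * ψ c * ψ d * ψ b)
        = K a b c d • (ψ c * ψ d * ψ a * ψ b) + (K a b c d * G a c) • (ψ d * ψ b)
          - (K a b c d * G a d) • (ψ c * ψ b) := by
      intro a b c d; rw [hm2]; simp only [smul_add, smul_sub, smul_smul]
    rw [Finset.sum_congr rfl fun a _ => Finset.sum_congr rfl fun b _ =>
      Finset.sum_congr rfl fun c _ => Finset.sum_congr rfl fun d _ => this a b c d]
    simp only [Finset.sum_add_distrib, Finset.sum_sub_distrib]
    rw [r1, ← hW, ← hT]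
    module
  -- sum of last ordering, reduced
  have rL : (∑ a : κ, ∑ b : κ, ∑ c : κ, ∑ d : κ, K a b c d • (ψ a * ψ b * ψ c * ψ d))
      = W + T + T + (T - s • (1:A)) - (s • (1:A) - T) := by
    have : ∀ a b c d : κ, K a b c d • (ψ a * ψ b * ψ c * ψ d)
        = K a b c d • (ψ c * ψ d * ψ a * ψ b) + (K a b c d * G a c) • (ψ d * ψ b)
          - (K a b c d * G a d) • (ψ c * ψ b) + (K a b c d * G b c) • (ψ a * ψ d)
          - (K a b c d * G b d) • (ψ a * ψ c) := by
      intro a b c d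
      rw [hm3]; simp only [smul_add, smul_sub, smul_smul]
    rw [Finset.sum_congr rfl fun a _ => Finset.sum_congr rfl fun b _ =>
      Finset.sum_congr rfl fun c _ => Finset.sum_congr rfl fun d _ => this a b c d]
    simp only [Finset.sum_add_distrib, Finset.sum_sub_distrib]
    rw [r1, r3, r4, ← hW, ← hT]
    module
  -- symmetry: last ordering sums to W
  have rsym : (∑ a : κ, ∑ b : κ, ∑ c : κ, ∑ d : κ, K a b c d • (ψ a * ψ b * ψ c * ψ d))
      = W := by
    rw [s4_swap_pairs (fun a b c d => K a b c d • (ψ a * ψ b * ψ c * ψ d))]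
    have : ∀ a b c d : κ, K c d a b • (ψ c * ψ d * ψ a * ψ b)
        = K a b c d • (ψ c * ψ d * ψ a * ψ b) := by
      intro a b c d; rw [← hKs]
    rw [Finset.sum_congr rfl fun a _ => Finset.sum_congr rfl fun b _ =>
      Finset.sum_congr rfl fun c _ => Finset.sum_congr rfl fun d _ => this a b c d]
  -- the value of T
  have hT1 : T = ((1/2 : ℝ) * s) • (1:A) := by
    have h := rsym.symm.trans rL
    linear_combination (norm := module) (-(1/4 : ℝ)) • h
  -- Jacobi step : W in terms of the two other orderings
  have rA1 : (∑ a : κ, ∑ b : κ, ∑ c : κ, ∑ d : κ, K a b c d • (ψ b * ψ c * ψ a * ψ d))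
      = W + T + T + T - s • (1:A) := by
    have hp : ∀ a b c d : κ, ψ b * ψ c * ψ a * ψ d
        = G b c • (ψ a * ψ d) - G a b • (ψ c * ψ d) + G b d • (ψ c * ψ a)
          - G a d • (ψ c * ψ b) + ψ c * ψ d * ψ a * ψ b := by
      intro a b c d
      have h1 : ψ b * ψ c * ψ a * ψ d
          = G b c • (ψ a * ψ d) - ψ c * ψ b * ψ a * ψ d := by
        rw [hsw b c]; noncomm_ring
      have h2 : ψ c * ψ b * ψ a * ψ d
          = G a b • (ψ c * ψ d) - ψ c * ψ a * ψ b * ψ d := by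
        rw [mul_assoc (ψ c) (ψ b) (ψ a), hsw b a, hGs b a]; noncomm_ring
      rw [h1, h2, w2 a b c d]
      noncomm_ring
    have : ∀ a b c d : κ, K a b c d • (ψ b * ψ c * ψ a * ψ d)
        = (K a b c d * G b c) • (ψ a * ψ d) - (K a b c d * G a b) • (ψ c * ψ d)
          + (K a b c d * G b d) • (ψ c * ψ a) - (K a b c d * G a d) • (ψ c * ψ b)
          + K a b c d • (ψ c * ψ d * ψ a * ψ b) := by
      intro a b c d
      rw [hp]; simp only [smul_add, smul_sub, smul_smul]
    rw [Finset.sum_congr rfl fun a _ => Finset.sum_congr rfl fun b _ =>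
      Finset.sum_congr rfl fun c _ => Finset.sum_congr rfl fun d _ => this a b c d]
    simp only [Finset.sum_add_distrib, Finset.sum_sub_distrib]
    rw [r1, r3, r5, rT5, ← hW]
    module
  have rA2 : (∑ a : κ, ∑ b : κ, ∑ c : κ, ∑ d : κ, K a b c d • (ψ d * ψ b * ψ a * ψ c))
      = W + T + T := by
    rw [s4_double (fun a b c d => K a b c d • (ψ d * ψ b * ψ a * ψ c))]
    have : ∀ a b c d : κ, K b a d c • (ψ c * ψ a * ψ b * ψ d)
        = (K a b c d * G b d) • (ψ c * ψ a) - (K a b c d * G a d) • (ψ c * ψ b)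
          + K a b c d • (ψ c * ψ d * ψ a * ψ b) := by
      intro a b c d
      rw [hK1, hK2, neg_neg, w2 a b c d]; simp only [smul_add, smul_sub, smul_smul]
    rw [Finset.sum_congr rfl fun a _ => Finset.sum_congr rfl fun b _ =>
      Finset.sum_congr rfl fun c _ => Finset.sum_congr rfl fun d _ => this a b c d]
    simp only [Finset.sum_add_distrib, Finset.sum_sub_distrib]
    rw [r1, rT5, ← hW]
    module
  have rW : W = -(W + T + T + T - s • (1:A)) - (W + T + T) := by
    have hpt : ∀ a b c d : κ, K a b c d • (ψ c * ψ d * ψ a * ψ b)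
        = -(K a c d b • (ψ c * ψ d * ψ a * ψ b))
          - (K a d b c • (ψ c * ψ d * ψ a * ψ b)) := by
      intro a b c d
      have h := hKj a b c d
      have : K a b c d = -K a c d b - K a d b c := by linarith
      rw [this, sub_smul, neg_smul]
    calc W = ∑ a : κ, ∑ b : κ, ∑ c : κ, ∑ d : κ, K a b c d • (ψ c * ψ d * ψ a * ψ b) := hW
      _ = ∑ a : κ, ∑ b : κ, ∑ c : κ, ∑ d : κ,
            (-(K a c d b • (ψ c * ψ d * ψ a * ψ b))
              - K a d b c • (ψ c * ψ d * ψ a * ψ b)) := by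
          exact Finset.sum_congr rfl fun a _ => Finset.sum_congr rfl fun b _ =>
            Finset.sum_congr rfl fun c _ => Finset.sum_congr rfl fun d _ => hpt a b c d
      _ = -(∑ a : κ, ∑ b : κ, ∑ c : κ, ∑ d : κ, K a c d b • (ψ c * ψ d * ψ a * ψ b))
          - ∑ a : κ, ∑ b : κ, ∑ c : κ, ∑ d : κ, K a d b c • (ψ c * ψ d * ψ a * ψ b) := by
          simp only [Finset.sum_sub_distrib, Finset.sum_neg_distrib]
      _ = -(W + T + T + T - s • (1:A)) - (W + T + T) := by
          rw [show (∑ a : κ, ∑ b : κ, ∑ c : κ, ∑ d : κ,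
              K a c d b • (ψ c * ψ d * ψ a * ψ b))
            = ∑ a : κ, ∑ b : κ, ∑ c : κ, ∑ d : κ, K a b c d • (ψ b * ψ c * ψ a * ψ d)
            from s4_cycB (fun a b c d => K a c d b • (ψ c * ψ d * ψ a * ψ b)),
            show (∑ a : κ, ∑ b : κ, ∑ c : κ, ∑ d : κ,
              K a d b c • (ψ c * ψ d * ψ a * ψ b))
            = ∑ a : κ, ∑ b : κ, ∑ c : κ, ∑ d : κ, K a b c d • (ψ d * ψ b * ψ a * ψ c)
            from s4_cycA (fun a b c d => K a d b c • (ψ c * ψ d * ψ a * ψ b)),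
            rA1, rA2]
  have hWval : W = (-(1/2 : ℝ) * s) • (1:A) := by
    linear_combination (norm := module) ((1/3 : ℝ)) • rW + (-(5/3 : ℝ)) • hT1
  -- final assembly
  have split : (∑ a : κ, ∑ b : κ, ∑ c : κ, ∑ d : κ, K a b c d •
        (ψ c * ψ d * ψ a * ψ b + ψ a * ψ c * ψ d * ψ b + ψ a * ψ b * ψ c * ψ d))
      = W + (W + T + T) + W := by
    have : ∀ a b c d : κ, K a b c d •
          (ψ c * ψ d * ψ a * ψ b + ψ a * ψ c * ψ d * ψ b + ψ a * ψ b * ψ c * ψ d)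
        = K a b c d • (ψ c * ψ d * ψ a * ψ b)
          + K a b c d • (ψ a * ψ c * ψ d * ψ b)
          + K a b c d • (ψ a * ψ b * ψ c * ψ d) := by
      intro a b c d; rw [smul_add, smul_add]
    rw [Finset.sum_congr rfl fun a _ => Finset.sum_congr rfl fun b _ =>
      Finset.sum_congr rfl fun c _ => Finset.sum_congr rfl fun d _ => this a b c d]
    simp only [Finset.sum_add_distrib]
    rw [rM, rsym, ← hW]
  rw [split, hWval, hT1]
  match_scalars
  ring

end Master
section Helpers
variable {κ : Type*} [Fintype κ]
variable {A : Type*} [Ring A] [Algebra ℝ A]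

lemma sum2_mulL (r : κ → κ → ℝ) (ψ : κ → A) (u v : A) (c : ℝ) :
    c • ((∑ p : κ, ∑ q : κ, r p q • (ψ p * ψ q)) * u * v)
      = ∑ p : κ, ∑ q : κ, (c * r p q) • (ψ p * ψ q * u * v) := by
  simp only [Finset.sum_mul, smul_mul_assoc, Finset.smul_sum, smul_smul]

lemma sum2_mulM (r : κ → κ → ℝ) (ψ : κ → A) (u v : A) (c : ℝ) :
    c • (u * (∑ p : κ, ∑ q : κ, r p q • (ψ p * ψ q)) * v)
      = ∑ p : κ, ∑ q : κ, (c * r p q) • (u * ψ p * ψ q * v) := by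
  simp only [Finset.mul_sum, Finset.sum_mul, mul_smul_comm, smul_mul_assoc,
    Finset.smul_sum, smul_smul, ← mul_assoc]

lemma sum2_mulR (r : κ → κ → ℝ) (ψ : κ → A) (u v : A) (c : ℝ) :
    c • (u * v * (∑ p : κ, ∑ q : κ, r p q • (ψ p * ψ q)))
      = ∑ p : κ, ∑ q : κ, (c * r p q) • (u * v * ψ p * ψ q) := by
  simp only [Finset.mul_sum, mul_smul_comm, Finset.smul_sum, smul_smul, ← mul_assoc]

end Helpers

section Cliff
variable {g : Type*} [LieRing g] [LieAlgebra ℝ g]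
variable {κ : Type*} [Fintype κ] [DecidableEq κ]
variable (B : g →ₗ[ℝ] g →ₗ[ℝ] ℝ) (Q : QuadraticForm ℝ g)

lemma sig4 (hB_symm : ∀ x y : g, B x y = B y x)
    (hB_nondeg : ∀ x : g, (∀ y : g, B x y = 0) → x = 0)
    (e : Module.Basis κ ℝ g) (e' : κ → g)
    (h_dual : ∀ a b : κ, B (e a) (e' b) = if a = b then 1 else 0) :
    (∑ b : κ, ∑ c : κ, ∑ p : κ, ∑ q : κ,
        B ⁅e b, e c⁆ ⁅e p, e q⁆ * B (e' b) (e' p) * B (e' c) (e' q))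
      = ∑ b : κ, ∑ c : κ, B ⁅e b, e c⁆ ⁅e' b, e' c⁆ := by
  refine Finset.sum_congr rfl fun b _ => Finset.sum_congr rfl fun c _ => ?_
  have he : ∀ a : κ, (∑ p : κ, B (e' a) (e' p) • e p) = e' a := fun a =>
    expandE B e e' hB_symm hB_nondeg h_dual (e' a)
  have hsl : ∀ (z : g) (F : κ → g), ⁅z, (∑ p : κ, F p)⁆ = ∑ p : κ, ⁅z, F p⁆ := by
    intro z F
    have h := map_sum (LieAlgebra.ad ℝ g z) F Finset.univ
    simp only [LieAlgebra.ad_apply] at h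
    exact h
  have hls : ∀ (z : g) (F : κ → g), ⁅(∑ p : κ, F p), z⁆ = ∑ p : κ, ⁅F p, z⁆ := by
    intro z F
    rw [← lie_skew, hsl z F, ← Finset.sum_neg_distrib]
    exact Finset.sum_congr rfl fun p _ => lie_skew (F p) z
  conv_rhs => rw [← he b, ← he c]
  rw [hls, map_sum]
  refine Finset.sum_congr rfl fun p _ => ?_
  rw [smul_lie, hsl, Finset.smul_sum, map_sum]
  refine Finset.sum_congr rfl fun q _ => ?_
  rw [lie_smul, smul_smul, map_smul, smul_eq_mul]
  ring

lemma S3sq (hB_symm : ∀ x y : g, B x y = B y x)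
    (hB_nondeg : ∀ x : g, (∀ y : g, B x y = 0) → x = 0)
    (hB_inv : ∀ x y z : g, B ⁅x, y⁆ z = B x ⁅y, z⁆)
    (e : Module.Basis κ ℝ g) (e' : κ → g)
    (h_dual : ∀ a b : κ, B (e a) (e' b) = if a = b then 1 else 0)
    (hQ : ∀ v : g, Q v = (1 / 2 : ℝ) * B v v) :
    (∑ a : κ, ∑ b : κ, ∑ c : κ,
        B (e a) ⁅e b, e c⁆ • (ι Q (e' a) * ι Q (e' b) * ι Q (e' c))) *
      (∑ a : κ, ∑ b : κ, ∑ c : κ,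
        B (e a) ⁅e b, e c⁆ • (ι Q (e' a) * ι Q (e' b) * ι Q (e' c)))
      = (-(3/4 : ℝ) * ∑ b : κ, ∑ c : κ, B ⁅e b, e c⁆ ⁅e' b, e' c⁆) • 1 := by
  set S3 : CliffordAlgebra Q := ∑ a : κ, ∑ b : κ, ∑ c : κ,
      B (e a) ⁅e b, e c⁆ • (ι Q (e' a) * ι Q (e' b) * ι Q (e' c)) with hS3
  set P : κ → CliffordAlgebra Q := fun a => ∑ p : κ, ∑ q : κ,
      B (e' a) ⁅e p, e q⁆ • (ι Q (e' p) * ι Q (e' q)) with hP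
  have expand : S3 * S3 + S3 * S3 = ∑ a : κ, ∑ b : κ, ∑ c : κ,
      B (e a) ⁅e b, e c⁆ •
        (S3 * (ι Q (e' a) * ι Q (e' b) * ι Q (e' c))
          + (ι Q (e' a) * ι Q (e' b) * ι Q (e' c)) * S3) := by
    calc S3 * S3 + S3 * S3
        = S3 * (∑ a : κ, ∑ b : κ, ∑ c : κ,
            B (e a) ⁅e b, e c⁆ • (ι Q (e' a) * ι Q (e' b) * ι Q (e' c)))
          + (∑ a : κ, ∑ b : κ, ∑ c : κ,
            B (e a) ⁅e b, e c⁆ • (ι Q (e' a) * ι Q (e' b) * ι Q (e' c))) * S3 := by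
          rw [← hS3]
      _ = ∑ a : κ, ∑ b : κ, ∑ c : κ, B (e a) ⁅e b, e c⁆ •
            (S3 * (ι Q (e' a) * ι Q (e' b) * ι Q (e' c))
              + (ι Q (e' a) * ι Q (e' b) * ι Q (e' c)) * S3) := by
          simp only [Finset.mul_sum, Finset.sum_mul, mul_smul_comm, smul_mul_assoc,
            smul_add, Finset.sum_add_distrib]
  have hanti : ∀ x : g, ι Q x * S3 + S3 * ι Q x = (3 : ℝ) •
      ∑ p : κ, ∑ q : κ, B x ⁅e p, e q⁆ • (ι Q (e' p) * ι Q (e' q)) :=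
    fun x => crossS3 B Q hB_symm hB_nondeg hB_inv e e' h_dual hQ x
  have hpt : ∀ a b c : κ,
      S3 * (ι Q (e' a) * ι Q (e' b) * ι Q (e' c))
        + (ι Q (e' a) * ι Q (e' b) * ι Q (e' c)) * S3
      = ((3:ℝ) • P a) * ι Q (e' b) * ι Q (e' c)
        - ι Q (e' a) * ((3:ℝ) • P b) * ι Q (e' c)
        + ι Q (e' a) * ι Q (e' b) * ((3:ℝ) • P c) := by
    intro a b c
    rw [ganti3 S3 (ι Q (e' a)) (ι Q (e' b)) (ι Q (e' c))]
    rw [add_comm (S3 * ι Q (e' a)) (ι Q (e' a) * S3), hanti (e' a),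
      add_comm (S3 * ι Q (e' b)) (ι Q (e' b) * S3), hanti (e' b),
      add_comm (S3 * ι Q (e' c)) (ι Q (e' c) * S3), hanti (e' c)]
  have expand2 : S3 * S3 + S3 * S3
      = (∑ a : κ, ∑ b : κ, ∑ c : κ, B (e a) ⁅e b, e c⁆ •
          (((3:ℝ) • P a) * ι Q (e' b) * ι Q (e' c)))
        - (∑ a : κ, ∑ b : κ, ∑ c : κ, B (e a) ⁅e b, e c⁆ •
          (ι Q (e' a) * ((3:ℝ) • P b) * ι Q (e' c)))
        + (∑ a : κ, ∑ b : κ, ∑ c : κ, B (e a) ⁅e b, e c⁆ •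
          (ι Q (e' a) * ι Q (e' b) * ((3:ℝ) • P c))) := by
    rw [expand, Finset.sum_congr rfl fun a _ => Finset.sum_congr rfl fun b _ =>
      Finset.sum_congr rfl fun c _ => by rw [hpt a b c]]
    simp only [smul_sub, smul_add, Finset.sum_add_distrib, Finset.sum_sub_distrib]
  -- rename the middle and last sums so that P always carries the first index
  have hmid : (∑ a : κ, ∑ b : κ, ∑ c : κ, B (e a) ⁅e b, e c⁆ •
        (ι Q (e' a) * ((3:ℝ) • P b) * ι Q (e' c)))
      = - ∑ a : κ, ∑ b : κ, ∑ c : κ, B (e a) ⁅e b, e c⁆ •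
        (ι Q (e' b) * ((3:ℝ) • P a) * ι Q (e' c)) := by
    rw [s3₁₂ (fun a b c => B (e a) ⁅e b, e c⁆ •
      (ι Q (e' a) * ((3:ℝ) • P b) * ι Q (e' c)))]
    rw [Finset.sum_congr rfl fun a _ => Finset.sum_congr rfl fun b _ =>
      Finset.sum_congr rfl fun c _ => by
        rw [Bswap B hB_symm hB_inv (e a) (e b) (e c), neg_smul]]
    simp only [Finset.sum_neg_distrib]
  have hlast : (∑ a : κ, ∑ b : κ, ∑ c : κ, B (e a) ⁅e b, e c⁆ •
        (ι Q (e' a) * ι Q (e' b) * ((3:ℝ) • P c)))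
      = ∑ a : κ, ∑ b : κ, ∑ c : κ, B (e a) ⁅e b, e c⁆ •
        (ι Q (e' b) * ι Q (e' c) * ((3:ℝ) • P a)) := by
    rw [s3_cycle (fun a b c => B (e a) ⁅e b, e c⁆ •
      (ι Q (e' a) * ι Q (e' b) * ((3:ℝ) • P c)))]
    exact Finset.sum_congr rfl fun a _ => Finset.sum_congr rfl fun b _ =>
      Finset.sum_congr rfl fun c _ => by
        rw [Bcyc B hB_symm hB_inv (e b) (e c) (e a)]
  -- now convert all three to contracted 4-index sums
  have hterm : ∀ a b c : κ,
      B (e a) ⁅e b, e c⁆ • (((3:ℝ) • P a) * ι Q (e' b) * ι Q (e' c))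
        + B (e a) ⁅e b, e c⁆ • (ι Q (e' b) * ((3:ℝ) • P a) * ι Q (e' c))
        + B (e a) ⁅e b, e c⁆ • (ι Q (e' b) * ι Q (e' c) * ((3:ℝ) • P a))
      = ∑ p : κ, ∑ q : κ,
          ((B (e a) ⁅e b, e c⁆ * 3) * B (e' a) ⁅e p, e q⁆) •
            (ι Q (e' p) * ι Q (e' q) * ι Q (e' b) * ι Q (e' c)
              + ι Q (e' b) * ι Q (e' p) * ι Q (e' q) * ι Q (e' c)
              + ι Q (e' b) * ι Q (e' c) * ι Q (e' p) * ι Q (e' q)) := by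
    intro a b c
    have h1 : B (e a) ⁅e b, e c⁆ • (((3:ℝ) • P a) * ι Q (e' b) * ι Q (e' c))
        = ∑ p : κ, ∑ q : κ, ((B (e a) ⁅e b, e c⁆ * 3) * B (e' a) ⁅e p, e q⁆) •
            (ι Q (e' p) * ι Q (e' q) * ι Q (e' b) * ι Q (e' c)) := by
      rw [smul_mul_assoc, smul_mul_assoc, smul_smul]
      exact sum2_mulL (fun p q => B (e' a) ⁅e p, e q⁆) (fun p => ι Q (e' p))
        (ι Q (e' b)) (ι Q (e' c)) (B (e a) ⁅e b, e c⁆ * 3)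
    have h2 : B (e a) ⁅e b, e c⁆ • (ι Q (e' b) * ((3:ℝ) • P a) * ι Q (e' c))
        = ∑ p : κ, ∑ q : κ, ((B (e a) ⁅e b, e c⁆ * 3) * B (e' a) ⁅e p, e q⁆) •
            (ι Q (e' b) * ι Q (e' p) * ι Q (e' q) * ι Q (e' c)) := by
      rw [mul_smul_comm, smul_mul_assoc, smul_smul]
      exact sum2_mulM (fun p q => B (e' a) ⁅e p, e q⁆) (fun p => ι Q (e' p))
        (ι Q (e' b)) (ι Q (e' c)) (B (e a) ⁅e b, e c⁆ * 3)
    have h3 : B (e a) ⁅e b, e c⁆ • (ι Q (e' b) * ι Q (e' c) * ((3:ℝ) • P a))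
        = ∑ p : κ, ∑ q : κ, ((B (e a) ⁅e b, e c⁆ * 3) * B (e' a) ⁅e p, e q⁆) •
            (ι Q (e' b) * ι Q (e' c) * ι Q (e' p) * ι Q (e' q)) := by
      rw [mul_smul_comm, smul_smul]
      exact sum2_mulR (fun p q => B (e' a) ⁅e p, e q⁆) (fun p => ι Q (e' p))
        (ι Q (e' b)) (ι Q (e' c)) (B (e a) ⁅e b, e c⁆ * 3)
    rw [h1, h2, h3]
    simp only [← Finset.sum_add_distrib, ← smul_add]
  have expand3 : S3 * S3 + S3 * S3
      = ∑ a : κ, ∑ b : κ, ∑ c : κ, ∑ p : κ, ∑ q : κ,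
          ((B (e a) ⁅e b, e c⁆ * 3) * B (e' a) ⁅e p, e q⁆) •
            (ι Q (e' p) * ι Q (e' q) * ι Q (e' b) * ι Q (e' c)
              + ι Q (e' b) * ι Q (e' p) * ι Q (e' q) * ι Q (e' c)
              + ι Q (e' b) * ι Q (e' c) * ι Q (e' p) * ι Q (e' q)) := by
    rw [expand2, hmid, hlast, sub_neg_eq_add]
    simp only [← Finset.sum_add_distrib]
    exact Finset.sum_congr rfl fun a _ => Finset.sum_congr rfl fun b _ =>
      Finset.sum_congr rfl fun c _ => hterm a b c
  have expand5 : S3 * S3 + S3 * S3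
      = (3:ℝ) • ∑ b : κ, ∑ c : κ, ∑ p : κ, ∑ q : κ,
          (B ⁅e b, e c⁆ ⁅e p, e q⁆) •
            (ι Q (e' p) * ι Q (e' q) * ι Q (e' b) * ι Q (e' c)
              + ι Q (e' b) * ι Q (e' p) * ι Q (e' q) * ι Q (e' c)
              + ι Q (e' b) * ι Q (e' c) * ι Q (e' p) * ι Q (e' q)) := by
    rw [expand3]
    rw [s3_rot (fun a b c => ∑ p : κ, ∑ q : κ,
      ((B (e a) ⁅e b, e c⁆ * 3) * B (e' a) ⁅e p, e q⁆) •
        (ι Q (e' p) * ι Q (e' q) * ι Q (e' b) * ι Q (e' c)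
          + ι Q (e' b) * ι Q (e' p) * ι Q (e' q) * ι Q (e' c)
          + ι Q (e' b) * ι Q (e' c) * ι Q (e' p) * ι Q (e' q)))]
    rw [Finset.smul_sum]
    refine Finset.sum_congr rfl fun b _ => ?_
    rw [Finset.smul_sum]
    refine Finset.sum_congr rfl fun c _ => ?_
    rw [s3_rot (fun a p q => ((B (e a) ⁅e b, e c⁆ * 3) * B (e' a) ⁅e p, e q⁆) •
        (ι Q (e' p) * ι Q (e' q) * ι Q (e' b) * ι Q (e' c)
          + ι Q (e' b) * ι Q (e' p) * ι Q (e' q) * ι Q (e' c)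
          + ι Q (e' b) * ι Q (e' c) * ι Q (e' p) * ι Q (e' q)))]
    rw [Finset.smul_sum]
    refine Finset.sum_congr rfl fun p _ => ?_
    rw [Finset.smul_sum]
    refine Finset.sum_congr rfl fun q _ => ?_
    rw [← Finset.sum_smul]
    rw [show (∑ a : κ, (B (e a) ⁅e b, e c⁆ * 3) * B (e' a) ⁅e p, e q⁆)
        = 3 * B ⁅e b, e c⁆ ⁅e p, e q⁆ from by
      rw [Finset.sum_congr rfl fun a _ => show
          (B (e a) ⁅e b, e c⁆ * 3) * B (e' a) ⁅e p, e q⁆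
            = 3 * (B ⁅e b, e c⁆ (e a) * B (e' a) ⁅e p, e q⁆) from by
        rw [hB_symm (e a) ⁅e b, e c⁆]; ring]
      rw [← Finset.mul_sum, contract1 B e e' hB_symm hB_nondeg h_dual]]
    rw [mul_smul]
  have master := quarticMaster (fun i => ι Q (e' i))
    (fun a b c d => B ⁅e a, e b⁆ ⁅e c, e d⁆) (fun a b => B (e' a) (e' b))
    (fun a b => hB_symm (e' a) (e' b))
    (fun a b => swap2 B Q hB_symm hQ (e' a) (e' b))
    (fun a b c d => by beta_reduce; rw [← lie_skew (e b) (e a), map_neg, LinearMap.neg_apply])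
    (fun a b c d => by beta_reduce; rw [← lie_skew (e d) (e c), map_neg])
    (fun a b c d => hB_symm _ _)
    (fun a b c d => by
      beta_reduce
      rw [hB_inv (e a) (e b), hB_inv (e a) (e c), hB_inv (e a) (e d),
        ← map_add, ← map_add, lie_jacobi (e b) (e c) (e d), map_zero])
  beta_reduce at master
  rw [master] at expand5
  rw [sig4 B hB_symm hB_nondeg e e' h_dual] at expand5
  linear_combination (norm := module) (1/2 : ℝ) • expand5

end Cliff

end CubicDiracAux

open CubicDiracAux

theorem cubic_dirac_operator_square
    {g : Type*} [LieRing g] [LieAlgebra ℝ g] [FiniteDimensional ℝ g]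
    -- the invariant, non-degenerate, symmetric bilinear form B
    (B : g →ₗ[ℝ] g →ₗ[ℝ] ℝ)
    (hB_symm : ∀ x y : g, B x y = B y x)
    (hB_nondeg : ∀ x : g, (∀ y : g, B x y = 0) → x = 0)
    (hB_inv : ∀ x y z : g, B ⁅x, y⁆ z = B x ⁅y, z⁆)
    -- a basis (e_a) and its B-dual basis (e^a)
    {κ : Type*} [Fintype κ] [DecidableEq κ] (e : Module.Basis κ ℝ g) (e' : κ → g)
    (h_dual : ∀ a b : κ, B (e a) (e' b) = if a = b then 1 else 0)
    -- the Clifford algebra of the quadratic form Q(v) = (1/2)·B(v,v)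
    (Q : QuadraticForm ℝ g) (hQ : ∀ v : g, Q v = (1 / 2 : ℝ) * B v v)
    -- the structure constants f_{abc} and f^{abc}
    (f : κ → κ → κ → ℝ) (hf : ∀ a b c : κ, f a b c = B (e a) ⁅e b, e c⁆)
    (f' : κ → κ → κ → ℝ) (hf' : ∀ a b c : κ, f' a b c = B (e' a) ⁅e' b, e' c⁆)
    -- the cubic element C
    (C : CliffordAlgebra Q)
    (hC : C = (1 / 6 : ℝ) •
      ∑ a : κ, ∑ b : κ, ∑ c : κ, f a b c • (ι Q (e' a) * ι Q (e' b) * ι Q (e' c)))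
    -- the cubic Dirac operator D in W(g) = U(g) ⊗ Cl(g)
    (D : UniversalEnvelopingAlgebra ℝ g ⊗[ℝ] CliffordAlgebra Q)
    (hD : D = (∑ a : κ,
        (UniversalEnvelopingAlgebra.ι ℝ (e a)) ⊗ₜ[ℝ] (ι Q (e' a)))
      - (1 : UniversalEnvelopingAlgebra ℝ g) ⊗ₜ[ℝ] C) :
    D ^ 2 = (1 / 2 : ℝ) • (∑ a : κ,
        (UniversalEnvelopingAlgebra.ι ℝ (e a) * UniversalEnvelopingAlgebra.ι ℝ (e' a))
          ⊗ₜ[ℝ] (1 : CliffordAlgebra Q))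
      - ((1 / 48 : ℝ) * ∑ a : κ, ∑ b : κ, ∑ c : κ, f a b c * f' a b c) •
        ((1 : UniversalEnvelopingAlgebra ℝ g) ⊗ₜ[ℝ] (1 : CliffordAlgebra Q)) := by
    -- identification of the scalar
  have hsf : (∑ a : κ, ∑ b : κ, ∑ c : κ, f a b c * f' a b c)
      = ∑ b : κ, ∑ c : κ, B ⁅e b, e c⁆ ⁅e' b, e' c⁆ := by
    rw [Finset.sum_congr rfl fun a _ => Finset.sum_congr rfl fun b _ =>
      Finset.sum_congr rfl fun c _ => by rw [hf, hf']]
    rw [s3_rot (fun a b c => B (e a) ⁅e b, e c⁆ * B (e' a) ⁅e' b, e' c⁆)]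
    refine Finset.sum_congr rfl fun b _ => Finset.sum_congr rfl fun c _ => ?_
    rw [Finset.sum_congr rfl fun a _ => show B (e a) ⁅e b, e c⁆ * B (e' a) ⁅e' b, e' c⁆
        = B ⁅e b, e c⁆ (e a) * B (e' a) ⁅e' b, e' c⁆ from by rw [hB_symm (e a)]]
    exact contract1 B e e' hB_symm hB_nondeg h_dual ⁅e b, e c⁆ ⁅e' b, e' c⁆
  have hCnew : C = (1/6:ℝ) • ∑ a : κ, ∑ b : κ, ∑ c : κ,
      B (e a) ⁅e b, e c⁆ • (ι Q (e' a) * ι Q (e' b) * ι Q (e' c)) := by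
    rw [hC]
    congr 1
    exact Finset.sum_congr rfl fun a _ => Finset.sum_congr rfl fun b _ =>
      Finset.sum_congr rfl fun c _ => by rw [hf]
  have hCC : C * C = (-(1/48:ℝ) * ∑ b : κ, ∑ c : κ, B ⁅e b, e c⁆ ⁅e' b, e' c⁆) •
      (1 : CliffordAlgebra Q) := by
    rw [hCnew, smul_mul_assoc, mul_smul_comm, smul_smul,
      S3sq B Q hB_symm hB_nondeg hB_inv e e' h_dual hQ, smul_smul]
    congr 1
    ring
  -- abbreviations
  set S : UniversalEnvelopingAlgebra ℝ g ⊗[ℝ] CliffordAlgebra Q := ∑ a : κ,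
      (UniversalEnvelopingAlgebra.ι ℝ (e a)) ⊗ₜ[ℝ] (ι Q (e' a)) with hS
  set T : UniversalEnvelopingAlgebra ℝ g ⊗[ℝ] CliffordAlgebra Q :=
      (1 : UniversalEnvelopingAlgebra ℝ g) ⊗ₜ[ℝ] C with hT
  have hE : D ^ 2 = S * S - S * T - T * S + T * T := by
    rw [hD, pow_two]
    noncomm_ring
  have hTT : T * T = (-(1/48:ℝ) * ∑ b : κ, ∑ c : κ, B ⁅e b, e c⁆ ⁅e' b, e' c⁆) •
      ((1 : UniversalEnvelopingAlgebra ℝ g) ⊗ₜ[ℝ] (1 : CliffordAlgebra Q)) := by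
    rw [hT, Algebra.TensorProduct.tmul_mul_tmul, one_mul, hCC, TensorProduct.tmul_smul]
  -- the anticommutator of ψ a with C
  have hanti2 : ∀ a : κ, ι Q (e' a) * C + C * ι Q (e' a)
      = (1/2:ℝ) • ∑ p : κ, ∑ q : κ,
          B (e' a) ⁅e p, e q⁆ • (ι Q (e' p) * ι Q (e' q)) := by
    intro a
    rw [hCnew, mul_smul_comm, smul_mul_assoc, ← smul_add,
      crossS3 B Q hB_symm hB_nondeg hB_inv e e' h_dual hQ (e' a), smul_smul]
    norm_num
  -- the cross terms
  have hST2 : S * T + T * S = (1/2:ℝ) • ∑ c : κ, ∑ a : κ, ∑ b : κ,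
      B (e' c) ⁅e a, e b⁆ •
        ((UniversalEnvelopingAlgebra.ι ℝ (e c)) ⊗ₜ[ℝ] (ι Q (e' a) * ι Q (e' b))) := by
    have h1 : S * T + T * S = ∑ a : κ,
        (UniversalEnvelopingAlgebra.ι ℝ (e a)) ⊗ₜ[ℝ]
          (ι Q (e' a) * C + C * ι Q (e' a)) := by
      rw [hS, hT]
      simp only [Finset.sum_mul, Finset.mul_sum, Algebra.TensorProduct.tmul_mul_tmul,
        one_mul, mul_one, ← Finset.sum_add_distrib, ← TensorProduct.tmul_add]
    rw [h1, Finset.sum_congr rfl fun a _ => by rw [hanti2 a]]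
    rw [Finset.smul_sum]
    refine Finset.sum_congr rfl fun c _ => ?_
    rw [TensorProduct.tmul_smul]
    congr 1
    rw [TensorProduct.tmul_sum]
    refine Finset.sum_congr rfl fun a _ => ?_
    rw [TensorProduct.tmul_sum]
    refine Finset.sum_congr rfl fun b _ => ?_
    rw [TensorProduct.tmul_smul]
  -- expansion of any vector in U(g)
  have uexp : ∀ x : g, UniversalEnvelopingAlgebra.ι ℝ x
      = ∑ c : κ, B x (e' c) • UniversalEnvelopingAlgebra.ι ℝ (e c) := by
    intro x
    letI : LieRing (UniversalEnvelopingAlgebra ℝ g) := LieRing.ofAssociativeRing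
    have h2 : (UniversalEnvelopingAlgebra.ι ℝ (L := g)).toLinearMap
        (∑ a : κ, B x (e' a) • e a)
        = ∑ c : κ, B x (e' c) •
            (UniversalEnvelopingAlgebra.ι ℝ (L := g)).toLinearMap (e c) := by
      rw [map_sum]
      exact Finset.sum_congr rfl fun c _ => by rw [map_smul]
    rw [expandE B e e' hB_symm hB_nondeg h_dual x] at h2
    simp only [LieHom.coe_toLinearMap] at h2
    exact h2
  -- the symmetrized square of S
  have hSS : S * S = ∑ a : κ, ∑ b : κ,
      (UniversalEnvelopingAlgebra.ι ℝ (e a) * UniversalEnvelopingAlgebra.ι ℝ (e b))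
        ⊗ₜ[ℝ] (ι Q (e' a) * ι Q (e' b)) := by
    rw [hS]
    simp only [Finset.sum_mul, Finset.mul_sum, Algebra.TensorProduct.tmul_mul_tmul]
    exact Finset.sum_comm
  have hSSb : S * S = ∑ a : κ, ∑ b : κ,
      (UniversalEnvelopingAlgebra.ι ℝ (e b) * UniversalEnvelopingAlgebra.ι ℝ (e a))
        ⊗ₜ[ℝ] (ι Q (e' b) * ι Q (e' a)) := hSS.trans Finset.sum_comm
  have hpoint : ∀ a b : κ,
      (UniversalEnvelopingAlgebra.ι ℝ (e a) * UniversalEnvelopingAlgebra.ι ℝ (e b))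
        ⊗ₜ[ℝ] (ι Q (e' a) * ι Q (e' b))
      + (UniversalEnvelopingAlgebra.ι ℝ (e b) * UniversalEnvelopingAlgebra.ι ℝ (e a))
        ⊗ₜ[ℝ] (ι Q (e' b) * ι Q (e' a))
      = (∑ c : κ, B (e' c) ⁅e a, e b⁆ •
          ((UniversalEnvelopingAlgebra.ι ℝ (e c)) ⊗ₜ[ℝ] (ι Q (e' a) * ι Q (e' b))))
        + B (e' b) (e' a) •
          ((UniversalEnvelopingAlgebra.ι ℝ (e b) * UniversalEnvelopingAlgebra.ι ℝ (e a))
            ⊗ₜ[ℝ] (1 : CliffordAlgebra Q)) := by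
    intro a b
    have hsw : ι Q (e' b) * ι Q (e' a)
        = B (e' b) (e' a) • (1 : CliffordAlgebra Q) - ι Q (e' a) * ι Q (e' b) :=
      swap2 B Q hB_symm hQ (e' b) (e' a)
    have hlie : UniversalEnvelopingAlgebra.ι ℝ (e a) * UniversalEnvelopingAlgebra.ι ℝ (e b)
        - UniversalEnvelopingAlgebra.ι ℝ (e b) * UniversalEnvelopingAlgebra.ι ℝ (e a)
        = UniversalEnvelopingAlgebra.ι ℝ ⁅e a, e b⁆ := by
      letI : LieRing (UniversalEnvelopingAlgebra ℝ g) := LieRing.ofAssociativeRing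
      rw [LieHom.map_lie, Ring.lie_def]
    have hexp : (UniversalEnvelopingAlgebra.ι ℝ ⁅e a, e b⁆)
          ⊗ₜ[ℝ] (ι Q (e' a) * ι Q (e' b))
        = ∑ c : κ, B (e' c) ⁅e a, e b⁆ •
            ((UniversalEnvelopingAlgebra.ι ℝ (e c)) ⊗ₜ[ℝ] (ι Q (e' a) * ι Q (e' b))) := by
      rw [uexp ⁅e a, e b⁆, TensorProduct.sum_tmul]
      exact Finset.sum_congr rfl fun c _ => by
        rw [← TensorProduct.smul_tmul', hB_symm ⁅e a, e b⁆ (e' c)]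
    rw [hsw, TensorProduct.tmul_sub, TensorProduct.tmul_smul, ← hexp, ← hlie,
      TensorProduct.sub_tmul]
    abel
  have hSum : S * S + S * S
      = (∑ c : κ, ∑ a : κ, ∑ b : κ, B (e' c) ⁅e a, e b⁆ •
          ((UniversalEnvelopingAlgebra.ι ℝ (e c)) ⊗ₜ[ℝ] (ι Q (e' a) * ι Q (e' b))))
        + ∑ a : κ,
          (UniversalEnvelopingAlgebra.ι ℝ (e a) * UniversalEnvelopingAlgebra.ι ℝ (e' a))
            ⊗ₜ[ℝ] (1 : CliffordAlgebra Q) := by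
    nth_rewrite 1 [hSS]
    nth_rewrite 1 [hSSb]
    rw [← Finset.sum_add_distrib]
    rw [Finset.sum_congr rfl fun a _ => (Finset.sum_add_distrib).symm]
    rw [Finset.sum_congr rfl fun a _ => Finset.sum_congr rfl fun b _ => hpoint a b]
    simp only [Finset.sum_add_distrib]
    congr 1
    · exact (s3_rot (fun c a b => B (e' c) ⁅e a, e b⁆ •
        ((UniversalEnvelopingAlgebra.ι ℝ (e c)) ⊗ₜ[ℝ] (ι Q (e' a) * ι Q (e' b))))).symm
    · rw [Finset.sum_comm]
      refine Finset.sum_congr rfl fun a _ => ?_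
      have : UniversalEnvelopingAlgebra.ι ℝ (e a) * UniversalEnvelopingAlgebra.ι ℝ (e' a)
          = ∑ b : κ, B (e' a) (e' b) •
            (UniversalEnvelopingAlgebra.ι ℝ (e a) * UniversalEnvelopingAlgebra.ι ℝ (e b)) := by
        rw [uexp (e' a), Finset.mul_sum]
        exact Finset.sum_congr rfl fun b _ => by rw [mul_smul_comm]
      rw [this, TensorProduct.sum_tmul]
      exact Finset.sum_congr rfl fun b _ => by rw [← TensorProduct.smul_tmul']
  rw [hsf]
  linear_combination (norm := module) hE + (1/2:ℝ) • hSum + (-1:ℝ) • hST2 + hTT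
end

section
/- Let g be a finite-dimensional real quadratic Lie algebra, and let D = Σ_a e_a ⊗ e^a − 1 ⊗ C be the cubic Dirac operator in the noncommutative Weil algebra W(g) = U(g) ⊗ Cl(g). Then D² lies in the center of U(g) ⊗ Cl(g): D²·x = x·D² for every x ∈ U(g) ⊗ Cl(g). -/
/-!
STATEMENT 3: Let g be a finite-dimensional real quadratic Lie algebra, and let
D = Σ_a e_a ⊗ e^a − 1 ⊗ C be the cubic Dirac operator in the noncommutative Weil algebra
W(g) = U(g) ⊗ Cl(g).  Then D² lies in the center of U(g) ⊗ Cl(g):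
D²·x = x·D² for every x ∈ U(g) ⊗ Cl(g).
-/

open CliffordAlgebra
open scoped TensorProduct

section Aux
variable {g : Type*} [LieRing g] [LieAlgebra ℝ g]
variable {κ : Type*} [Fintype κ] [DecidableEq κ]
variable (B : g →ₗ[ℝ] g →ₗ[ℝ] ℝ)

lemma aux_exp1 (e : Module.Basis κ ℝ g) (e' : κ → g)
    (h_dual : ∀ a b : κ, B (e a) (e' b) = if a = b then 1 else 0) (v : g) :
    ∑ a : κ, B v (e' a) • e a = v := by
  have h : ∀ a, B v (e' a) = e.repr v a := by
    intro a
    conv_lhs => rw [← e.sum_repr v]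
    simp [map_sum, map_smul, LinearMap.sum_apply, LinearMap.smul_apply, h_dual,
      smul_eq_mul, mul_ite, mul_one, mul_zero, -Module.Basis.sum_repr]
  simp_rw [h]
  exact e.sum_repr v

lemma aux_exp2 (hB_symm : ∀ x y : g, B x y = B y x)
    (hB_nondeg : ∀ x : g, (∀ y : g, B x y = 0) → x = 0)
    (e : Module.Basis κ ℝ g) (e' : κ → g)
    (h_dual : ∀ a b : κ, B (e a) (e' b) = if a = b then 1 else 0) (v : g) :
    ∑ a : κ, B (e a) v • e' a = v := by
  have hb : ∀ b, B ((∑ a : κ, B (e a) v • e' a) - v) (e b) = 0 := by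
    intro b
    have h1 : ∀ a, B (e' a) (e b) = if b = a then 1 else 0 := by
      intro a; rw [hB_symm, h_dual]
    simp [map_sub, map_sum, map_smul, LinearMap.sub_apply, LinearMap.sum_apply,
      LinearMap.smul_apply, h1, smul_eq_mul, mul_ite, mul_one, mul_zero,
      hB_symm (e b) v]
  have hy : ∀ y, B ((∑ a : κ, B (e a) v • e' a) - v) y = 0 := by
    intro y
    conv_lhs => rw [← e.sum_repr y]
    rw [map_sum]
    simp only [map_smul, smul_eq_mul, hb, mul_zero]
    exact Finset.sum_const_zero
  have := hB_nondeg _ hy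
  exact sub_eq_zero.mp this

lemma aux_contract1 (e : Module.Basis κ ℝ g) (e' : κ → g)
    (h_dual : ∀ a b : κ, B (e a) (e' b) = if a = b then 1 else 0) (u w : g) :
    ∑ a : κ, B u (e' a) * B (e a) w = B u w := by
  conv_rhs => rw [← aux_exp1 B e e' h_dual u]
  simp [map_sum, LinearMap.sum_apply, map_smul, LinearMap.smul_apply, smul_eq_mul]

lemma aux_contract2 (hB_symm : ∀ x y : g, B x y = B y x)
    (hB_nondeg : ∀ x : g, (∀ y : g, B x y = 0) → x = 0)
    (e : Module.Basis κ ℝ g) (e' : κ → g)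
    (h_dual : ∀ a b : κ, B (e a) (e' b) = if a = b then 1 else 0) (u w : g) :
    ∑ a : κ, B (e a) u * B (e' a) w = B u w := by
  conv_rhs => rw [← aux_exp2 B hB_symm hB_nondeg e e' h_dual u]
  simp [map_sum, LinearMap.sum_apply, map_smul, LinearMap.smul_apply, smul_eq_mul]

-- cyclic / skew identities
lemma aux_cyc (hB_symm : ∀ x y : g, B x y = B y x)
    (hB_inv : ∀ x y z : g, B ⁅x, y⁆ z = B x ⁅y, z⁆) (x y z : g) :
    B x ⁅y, z⁆ = B z ⁅x, y⁆ := by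
  rw [← hB_inv, hB_symm]

lemma aux_skw (hB_symm : ∀ x y : g, B x y = B y x)
    (hB_inv : ∀ x y z : g, B ⁅x, y⁆ z = B x ⁅y, z⁆) (x y z : g) :
    B x ⁅y, z⁆ = - B y ⁅x, z⁆ := by
  rw [aux_cyc B hB_symm hB_inv x y z, aux_cyc B hB_symm hB_inv y x z,
    show (⁅y,x⁆:g) = -⁅x,y⁆ by rw [← lie_skew x y, neg_neg], map_neg, neg_neg]

end Aux
section Cliff
variable {g : Type*} [LieRing g] [LieAlgebra ℝ g]
variable (B : g →ₗ[ℝ] g →ₗ[ℝ] ℝ) (Q : QuadraticForm ℝ g)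

lemma aux_pol (hB_symm : ∀ x y : g, B x y = B y x)
    (hQ : ∀ v : g, Q v = (1 / 2 : ℝ) * B v v) (v w : g) :
    ι Q v * ι Q w + ι Q w * ι Q v = algebraMap ℝ _ (B v w) := by
  rw [ι_mul_ι_add_swap]
  congr 1
  simp only [QuadraticMap.polar, hQ, map_add, LinearMap.add_apply]
  have := hB_symm v w
  ring_nf
  linarith

lemma aux_swap (hB_symm : ∀ x y : g, B x y = B y x)
    (hQ : ∀ v : g, Q v = (1 / 2 : ℝ) * B v v) (v w : g) :
    ι Q w * ι Q v = B v w • (1 : CliffordAlgebra Q) - ι Q v * ι Q w := by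
  have h := aux_pol B Q hB_symm hQ v w
  rw [Algebra.algebraMap_eq_smul_one] at h
  rw [← h]; abel

lemma aux_triple (hB_symm : ∀ x y : g, B x y = B y x)
    (hQ : ∀ v : g, Q v = (1 / 2 : ℝ) * B v v) (x y z w : g) :
    (ι Q x * ι Q y * ι Q z) * ι Q w + ι Q w * (ι Q x * ι Q y * ι Q z)
      = B z w • (ι Q x * ι Q y) - B y w • (ι Q x * ι Q z) + B x w • (ι Q y * ι Q z) := by
  have hx := aux_swap B Q hB_symm hQ x w
  have hy := aux_swap B Q hB_symm hQ y w
  have hz := aux_swap B Q hB_symm hQ z w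
  have h1 : ι Q w * (ι Q x * ι Q y * ι Q z)
      = B x w • (ι Q y * ι Q z) - B y w • (ι Q x * ι Q z) + B z w • (ι Q x * ι Q y)
        - (ι Q x * ι Q y * ι Q z) * ι Q w := by
    calc ι Q w * (ι Q x * ι Q y * ι Q z)
        = (ι Q w * ι Q x) * ι Q y * ι Q z := by noncomm_ring
      _ = (B x w • (1 : CliffordAlgebra Q) - ι Q x * ι Q w) * ι Q y * ι Q z := by rw [hx]
      _ = B x w • (ι Q y * ι Q z) - ι Q x * (ι Q w * ι Q y) * ι Q z := by noncomm_ring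
      _ = B x w • (ι Q y * ι Q z)
            - ι Q x * (B y w • (1 : CliffordAlgebra Q) - ι Q y * ι Q w) * ι Q z := by rw [hy]
      _ = B x w • (ι Q y * ι Q z) - B y w • (ι Q x * ι Q z)
            + ι Q x * ι Q y * (ι Q w * ι Q z) := by noncomm_ring
      _ = B x w • (ι Q y * ι Q z) - B y w • (ι Q x * ι Q z)
            + ι Q x * ι Q y * (B z w • (1 : CliffordAlgebra Q) - ι Q z * ι Q w) := by rw [hz]
      _ = B x w • (ι Q y * ι Q z) - B y w • (ι Q x * ι Q z) + B z w • (ι Q x * ι Q y)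
            - (ι Q x * ι Q y * ι Q z) * ι Q w := by noncomm_ring
  rw [h1]; abel

end Cliff
section Sums
variable {κ : Type*} [Fintype κ]

lemma aux_rot {M : Type*} [AddCommMonoid M] (F : κ → κ → κ → M) :
    ∑ a : κ, ∑ b : κ, ∑ c : κ, F a b c = ∑ a : κ, ∑ b : κ, ∑ c : κ, F c a b := by
  have h1 : ∑ a : κ, ∑ b : κ, ∑ c : κ, F a b c
      = ∑ b : κ, ∑ a : κ, ∑ c : κ, F a b c := Finset.sum_comm
  have h2 : ∑ b : κ, ∑ a : κ, ∑ c : κ, F a b c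
      = ∑ b : κ, ∑ c : κ, ∑ a : κ, F a b c :=
    Finset.sum_congr rfl fun _ _ => Finset.sum_comm
  exact h1.trans h2

lemma aux_swap12 {M : Type*} [AddCommMonoid M] (F : κ → κ → κ → M) :
    ∑ a : κ, ∑ b : κ, ∑ c : κ, F a b c = ∑ a : κ, ∑ b : κ, ∑ c : κ, F b a c :=
  Finset.sum_comm

lemma aux_anti_vanish {M : Type*} [AddCommGroup M] [Module ℝ M] (F : κ → κ → M)
    (h : ∀ p q, F q p = - F p q) : ∑ p : κ, ∑ q : κ, F p q = 0 := by
  have h2 : ∑ p : κ, ∑ q : κ, F p q = - ∑ p : κ, ∑ q : κ, F p q := by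
    calc ∑ p : κ, ∑ q : κ, F p q = ∑ q : κ, ∑ p : κ, F p q := Finset.sum_comm
      _ = ∑ q : κ, ∑ p : κ, (- F q p) :=
          Finset.sum_congr rfl fun q _ => Finset.sum_congr rfl fun p _ => h q p
      _ = - ∑ q : κ, ∑ p : κ, F q p := by simp
  have h3 : (2 : ℝ) • ∑ p : κ, ∑ q : κ, F p q = 0 := by
    rw [two_smul]; nth_rewrite 1 [h2]; abel
  have := congrArg (fun z => (2⁻¹ : ℝ) • z) h3
  simpa [smul_smul] using this
end Sums
section CC
variable {g : Type*} [LieRing g] [LieAlgebra ℝ g]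
variable {κ : Type*} [Fintype κ] [DecidableEq κ]
variable (B : g →ₗ[ℝ] g →ₗ[ℝ] ℝ) (Q : QuadraticForm ℝ g)

lemma aux_CC
    (hB_symm : ∀ x y : g, B x y = B y x)
    (hB_nondeg : ∀ x : g, (∀ y : g, B x y = 0) → x = 0)
    (hB_inv : ∀ x y z : g, B ⁅x, y⁆ z = B x ⁅y, z⁆)
    (e : Module.Basis κ ℝ g) (e' : κ → g)
    (h_dual : ∀ a b : κ, B (e a) (e' b) = if a = b then 1 else 0)
    (hQ : ∀ v : g, Q v = (1 / 2 : ℝ) * B v v)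
    (C : CliffordAlgebra Q)
    (hC : C = (1 / 6 : ℝ) •
      ∑ a : κ, ∑ b : κ, ∑ c : κ,
        (B (e a) ⁅e b, e c⁆) • (ι Q (e' a) * ι Q (e' b) * ι Q (e' c)))
    (w : g) :
    C * ι Q w + ι Q w * C = (1 / 2 : ℝ) •
      ∑ b : κ, ∑ c : κ, (B ⁅e b, e c⁆ w) • (ι Q (e' b) * ι Q (e' c)) := by
  subst hC
  rw [smul_mul_assoc, mul_smul_comm, ← smul_add]
  have expand :
      (∑ a : κ, ∑ b : κ, ∑ c : κ,
          (B (e a) ⁅e b, e c⁆) • (ι Q (e' a) * ι Q (e' b) * ι Q (e' c))) * ι Q w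
        + ι Q w * (∑ a : κ, ∑ b : κ, ∑ c : κ,
          (B (e a) ⁅e b, e c⁆) • (ι Q (e' a) * ι Q (e' b) * ι Q (e' c)))
      = ∑ a : κ, ∑ b : κ, ∑ c : κ, (B (e a) ⁅e b, e c⁆) •
          ((B (e' c) w) • (ι Q (e' a) * ι Q (e' b))
            - (B (e' b) w) • (ι Q (e' a) * ι Q (e' c))
            + (B (e' a) w) • (ι Q (e' b) * ι Q (e' c))) := by
    simp_rw [Finset.sum_mul, Finset.mul_sum, ← Finset.sum_add_distrib,
      smul_mul_assoc, mul_smul_comm, ← smul_add]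
    refine Finset.sum_congr rfl fun a _ => Finset.sum_congr rfl fun b _ =>
      Finset.sum_congr rfl fun c _ => ?_
    rw [aux_triple B Q hB_symm hQ]
  rw [expand]
  simp_rw [smul_add, smul_sub, smul_smul, Finset.sum_add_distrib,
    Finset.sum_sub_distrib]
  have hterm1 : ∑ a : κ, ∑ b : κ, ∑ c : κ,
        (B (e a) ⁅e b, e c⁆ * B (e' c) w) • (ι Q (e' a) * ι Q (e' b))
      = ∑ a : κ, ∑ b : κ, (B ⁅e a, e b⁆ w) • (ι Q (e' a) * ι Q (e' b)) := by
    refine Finset.sum_congr rfl fun a _ => Finset.sum_congr rfl fun b _ => ?_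
    rw [← Finset.sum_smul]
    congr 1
    have : ∀ c, B (e a) ⁅e b, e c⁆ = B (e c) ⁅e a, e b⁆ := fun c => by
      rw [aux_cyc B hB_symm hB_inv]
    simp_rw [this]
    exact aux_contract2 B hB_symm hB_nondeg e e' h_dual ⁅e a, e b⁆ w
  have hterm2 : ∑ a : κ, ∑ b : κ, ∑ c : κ,
        (B (e a) ⁅e b, e c⁆ * B (e' b) w) • (ι Q (e' a) * ι Q (e' c))
      = - ∑ a : κ, ∑ b : κ, (B ⁅e a, e b⁆ w) • (ι Q (e' a) * ι Q (e' b)) := by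
    have hsw : ∑ a : κ, ∑ b : κ, ∑ c : κ,
          (B (e a) ⁅e b, e c⁆ * B (e' b) w) • (ι Q (e' a) * ι Q (e' c))
        = ∑ a : κ, ∑ c : κ, ∑ b : κ,
          (B (e a) ⁅e b, e c⁆ * B (e' b) w) • (ι Q (e' a) * ι Q (e' c)) :=
      Finset.sum_congr rfl fun a _ => Finset.sum_comm
    rw [hsw, ← Finset.sum_neg_distrib]
    refine Finset.sum_congr rfl fun a _ => ?_
    rw [← Finset.sum_neg_distrib]
    refine Finset.sum_congr rfl fun c _ => ?_
    rw [← Finset.sum_smul, ← neg_smul]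
    congr 1
    have : ∀ b, B (e a) ⁅e b, e c⁆ = - B (e b) ⁅e a, e c⁆ := fun b =>
      aux_skw B hB_symm hB_inv (e a) (e b) (e c)
    simp_rw [this, neg_mul, Finset.sum_neg_distrib]
    rw [aux_contract2 B hB_symm hB_nondeg e e' h_dual ⁅e a, e c⁆ w]
  have hterm3 : ∑ a : κ, ∑ b : κ, ∑ c : κ,
        (B (e a) ⁅e b, e c⁆ * B (e' a) w) • (ι Q (e' b) * ι Q (e' c))
      = ∑ a : κ, ∑ b : κ, (B ⁅e a, e b⁆ w) • (ι Q (e' a) * ι Q (e' b)) := by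
    rw [aux_rot (fun a b c =>
      (B (e a) ⁅e b, e c⁆ * B (e' a) w) • (ι Q (e' b) * ι Q (e' c)))]
    refine Finset.sum_congr rfl fun b _ => Finset.sum_congr rfl fun c _ => ?_
    rw [← Finset.sum_smul]
    congr 1
    exact aux_contract2 B hB_symm hB_nondeg e e' h_dual ⁅e b, e c⁆ w
  rw [hterm1, hterm2, hterm3, sub_neg_eq_add]
  module
end CC
section Sums2
variable {κ : Type*} [Fintype κ]
lemma aux_rot' {M : Type*} [AddCommMonoid M] (F : κ → κ → κ → M) :
    ∑ a : κ, ∑ b : κ, ∑ c : κ, F a b c = ∑ a : κ, ∑ b : κ, ∑ c : κ, F b c a :=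
  (aux_rot (fun a b c => F b c a)).symm
end Sums2

section XYZ
variable {g : Type*} [LieRing g] [LieAlgebra ℝ g]
variable {κ : Type*} [Fintype κ]
variable (B : g →ₗ[ℝ] g →ₗ[ℝ] ℝ) (Q : QuadraticForm ℝ g)

lemma aux_XYZ
    (hB_symm : ∀ x y : g, B x y = B y x)
    (hQ : ∀ v : g, Q v = (1 / 2 : ℝ) * B v v)
    (e' : κ → g) (T : κ → κ → κ → ℝ)
    (t_anti : ∀ p q c, T q p c = - T p q c)
    (t_cyc : ∀ p q c, T p q c + T q c p + T c p q = 0) :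
    (∑ p : κ, ∑ q : κ, ∑ c : κ,
        T p q c • (ι Q (e' p) * (ι Q (e' q) * ι Q (e' c))))
      + (∑ p : κ, ∑ q : κ, ∑ c : κ,
        T p q c • (ι Q (e' c) * (ι Q (e' p) * ι Q (e' q)))) = 0 := by
  set X := ∑ p : κ, ∑ q : κ, ∑ c : κ,
      T p q c • (ι Q (e' p) * (ι Q (e' q) * ι Q (e' c))) with hX
  set Y := ∑ p : κ, ∑ q : κ, ∑ c : κ,
      T p q c • (ι Q (e' c) * (ι Q (e' p) * ι Q (e' q))) with hYdef
  set Z := ∑ p : κ, ∑ q : κ, ∑ c : κ,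
      T p q c • (ι Q (e' q) * (ι Q (e' c) * ι Q (e' p))) with hZdef
  set W := ∑ p : κ, ∑ q : κ, ∑ c : κ,
      (T p q c * B (e' p) (e' c)) • ι Q (e' q) with hW
  set S1 := ∑ p : κ, ∑ q : κ, ∑ c : κ,
      (T p q c * B (e' q) (e' c)) • ι Q (e' p) with hS1def
  set S2 := ∑ p : κ, ∑ q : κ, ∑ c : κ,
      (T p q c * B (e' p) (e' q)) • ι Q (e' c) with hS2def
  -- pointwise Clifford rewrites
  have m1 : ∀ p q c : κ, ι Q (e' c) * (ι Q (e' p) * ι Q (e' q))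
      = ι Q (e' p) * (ι Q (e' q) * ι Q (e' c))
        - B (e' q) (e' c) • ι Q (e' p) + B (e' p) (e' c) • ι Q (e' q) := by
    intro p q c
    have h1 := aux_swap B Q hB_symm hQ (e' p) (e' c)
    have h2 := aux_swap B Q hB_symm hQ (e' q) (e' c)
    calc ι Q (e' c) * (ι Q (e' p) * ι Q (e' q))
        = (ι Q (e' c) * ι Q (e' p)) * ι Q (e' q) := by rw [mul_assoc]
      _ = (B (e' p) (e' c) • (1 : CliffordAlgebra Q)
            - ι Q (e' p) * ι Q (e' c)) * ι Q (e' q) := by rw [h1]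
      _ = B (e' p) (e' c) • ι Q (e' q)
            - ι Q (e' p) * (ι Q (e' c) * ι Q (e' q)) := by noncomm_ring
      _ = B (e' p) (e' c) • ι Q (e' q) - ι Q (e' p) *
            (B (e' q) (e' c) • (1 : CliffordAlgebra Q)
              - ι Q (e' q) * ι Q (e' c)) := by rw [h2]
      _ = ι Q (e' p) * (ι Q (e' q) * ι Q (e' c))
            - B (e' q) (e' c) • ι Q (e' p) + B (e' p) (e' c) • ι Q (e' q) := by
          noncomm_ring
  have m2 : ∀ p q c : κ, ι Q (e' q) * (ι Q (e' c) * ι Q (e' p))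
      = ι Q (e' p) * (ι Q (e' q) * ι Q (e' c))
        - B (e' p) (e' q) • ι Q (e' c) + B (e' p) (e' c) • ι Q (e' q) := by
    intro p q c
    have h1 := aux_swap B Q hB_symm hQ (e' p) (e' c)
    have h2 := aux_swap B Q hB_symm hQ (e' p) (e' q)
    calc ι Q (e' q) * (ι Q (e' c) * ι Q (e' p))
        = ι Q (e' q) * (B (e' p) (e' c) • (1 : CliffordAlgebra Q)
            - ι Q (e' p) * ι Q (e' c)) := by rw [h1]
      _ = B (e' p) (e' c) • ι Q (e' q)
            - (ι Q (e' q) * ι Q (e' p)) * ι Q (e' c) := by noncomm_ring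
      _ = B (e' p) (e' c) • ι Q (e' q)
            - (B (e' p) (e' q) • (1 : CliffordAlgebra Q)
              - ι Q (e' p) * ι Q (e' q)) * ι Q (e' c) := by rw [h2]
      _ = ι Q (e' p) * (ι Q (e' q) * ι Q (e' c))
            - B (e' p) (e' q) • ι Q (e' c) + B (e' p) (e' c) • ι Q (e' q) := by
          noncomm_ring
  have hY : Y = X - S1 + W := by
    rw [hYdef, hX, hS1def, hW]
    simp only [← Finset.sum_add_distrib, ← Finset.sum_sub_distrib]
    refine Finset.sum_congr rfl fun p _ => Finset.sum_congr rfl fun q _ =>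
      Finset.sum_congr rfl fun c _ => ?_
    rw [m1 p q c, smul_add, smul_sub, smul_smul, smul_smul]
  have hZ : Z = X - S2 + W := by
    rw [hZdef, hX, hS2def, hW]
    simp only [← Finset.sum_add_distrib, ← Finset.sum_sub_distrib]
    refine Finset.sum_congr rfl fun p _ => Finset.sum_congr rfl fun q _ =>
      Finset.sum_congr rfl fun c _ => ?_
    rw [m2 p q c, smul_add, smul_sub, smul_smul, smul_smul]
  have hS2 : S2 = 0 := by
    rw [hS2def]
    refine aux_anti_vanish
      (fun p q => ∑ c : κ, (T p q c * B (e' p) (e' q)) • ι Q (e' c)) ?_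
    intro p q
    rw [← Finset.sum_neg_distrib]
    refine Finset.sum_congr rfl fun c _ => ?_
    rw [t_anti, hB_symm (e' q) (e' p), neg_mul, neg_smul]
  have hS1W : S1 + W = 0 := by
    rw [hS1def, hW]
    rw [← Finset.sum_add_distrib]
    simp only [← Finset.sum_add_distrib]
    refine aux_anti_vanish (fun p q => ∑ c : κ,
      ((T p q c * B (e' q) (e' c)) • ι Q (e' p)
        + (T p q c * B (e' p) (e' c)) • ι Q (e' q))) ?_
    intro p q
    rw [← Finset.sum_neg_distrib]
    refine Finset.sum_congr rfl fun c _ => ?_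
    rw [t_anti]
    simp only [neg_mul, neg_smul]
    abel
  have hXYZ : X + Y + Z = 0 := by
    have hYr : Y = ∑ p : κ, ∑ q : κ, ∑ c : κ,
        T q c p • (ι Q (e' p) * (ι Q (e' q) * ι Q (e' c))) := by
      rw [hYdef]
      exact aux_rot' (fun a b c => T a b c • (ι Q (e' c) * (ι Q (e' a) * ι Q (e' b))))
    have hZr : Z = ∑ p : κ, ∑ q : κ, ∑ c : κ,
        T c p q • (ι Q (e' p) * (ι Q (e' q) * ι Q (e' c))) := by
      rw [hZdef]
      exact aux_rot (fun a b c => T a b c • (ι Q (e' b) * (ι Q (e' c) * ι Q (e' a))))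
    rw [hX, hYr, hZr]
    simp only [← Finset.sum_add_distrib, ← add_smul]
    refine Finset.sum_eq_zero fun p _ => Finset.sum_eq_zero fun q _ =>
      Finset.sum_eq_zero fun c _ => ?_
    rw [t_cyc p q c, zero_smul]
  -- combine: 3(X + W) = 0 hence X + W = 0, and X + Y = 2(X+W)
  have hS1' : S1 = - W := eq_neg_of_add_eq_zero_left hS1W
  have h3 : (X + W) + (X + W) + (X + W) = 0 := by
    have := hXYZ
    rw [hY, hZ, hS1', hS2] at this
    calc (X + W) + (X + W) + (X + W) = X + (X - - W + W) + (X - 0 + W) := by abel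
      _ = 0 := this
  have hXW : X + W = 0 := by
    have h4 : (3 : ℝ) • (X + W) = 0 := by
      rw [show (3:ℝ) = 1 + 1 + 1 by norm_num, add_smul, add_smul, one_smul]
      rw [← h3]
    have := congrArg (fun z => (3⁻¹ : ℝ) • z) h4
    simpa [smul_smul] using this
  calc X + Y = (X + W) + (X + W) := by rw [hY, hS1']; abel
    _ = 0 := by rw [hXW]; simp

lemma aux_P1 (e' : κ → g) (K : κ → κ → ℝ) (s : κ → κ → κ → ℝ) (T : κ → κ → κ → ℝ)
    (hcon : ∀ c p q, (∑ b : κ, K b c * s p q b) = T p q c) :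
    ∑ b : κ, ∑ c : κ, K b c •
        ((∑ p : κ, ∑ q : κ, s p q b • (ι Q (e' p) * ι Q (e' q))) * ι Q (e' c))
      = ∑ p : κ, ∑ q : κ, ∑ c : κ,
          T p q c • (ι Q (e' p) * (ι Q (e' q) * ι Q (e' c))) := by
  calc ∑ b : κ, ∑ c : κ, K b c •
        ((∑ p : κ, ∑ q : κ, s p q b • (ι Q (e' p) * ι Q (e' q))) * ι Q (e' c))
      = ∑ b : κ, ∑ c : κ, ∑ p : κ, ∑ q : κ,
          (K b c * s p q b) • (ι Q (e' p) * ι Q (e' q) * ι Q (e' c)) := by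
        simp only [Finset.sum_mul, smul_mul_assoc, Finset.smul_sum, smul_smul]
    _ = ∑ c : κ, ∑ b : κ, ∑ p : κ, ∑ q : κ,
          (K b c * s p q b) • (ι Q (e' p) * ι Q (e' q) * ι Q (e' c)) :=
        Finset.sum_comm
    _ = ∑ c : κ, ∑ p : κ, ∑ q : κ, ∑ b : κ,
          (K b c * s p q b) • (ι Q (e' p) * ι Q (e' q) * ι Q (e' c)) :=
        Finset.sum_congr rfl fun c _ => aux_rot _
    _ = ∑ c : κ, ∑ p : κ, ∑ q : κ,
          (∑ b : κ, K b c * s p q b) • (ι Q (e' p) * ι Q (e' q) * ι Q (e' c)) := by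
        simp only [← Finset.sum_smul]
    _ = ∑ c : κ, ∑ p : κ, ∑ q : κ,
          T p q c • (ι Q (e' p) * ι Q (e' q) * ι Q (e' c)) := by
        simp_rw [hcon]
    _ = ∑ p : κ, ∑ q : κ, ∑ c : κ,
          T p q c • (ι Q (e' p) * ι Q (e' q) * ι Q (e' c)) := aux_rot _
    _ = ∑ p : κ, ∑ q : κ, ∑ c : κ,
          T p q c • (ι Q (e' p) * (ι Q (e' q) * ι Q (e' c))) := by
        simp only [mul_assoc]

lemma aux_P2 (e' : κ → g) (K : κ → κ → ℝ) (s : κ → κ → κ → ℝ) (T : κ → κ → κ → ℝ)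
    (hcon : ∀ b p q, (∑ c : κ, K b c * s p q c) = - T p q b) :
    ∑ b : κ, ∑ c : κ, K b c •
        (ι Q (e' b) * (∑ p : κ, ∑ q : κ, s p q c • (ι Q (e' p) * ι Q (e' q))))
      = - ∑ p : κ, ∑ q : κ, ∑ c : κ,
          T p q c • (ι Q (e' c) * (ι Q (e' p) * ι Q (e' q))) := by
  calc ∑ b : κ, ∑ c : κ, K b c •
        (ι Q (e' b) * (∑ p : κ, ∑ q : κ, s p q c • (ι Q (e' p) * ι Q (e' q))))
      = ∑ b : κ, ∑ c : κ, ∑ p : κ, ∑ q : κ,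
          (K b c * s p q c) • (ι Q (e' b) * (ι Q (e' p) * ι Q (e' q))) := by
        simp only [Finset.mul_sum, mul_smul_comm, Finset.smul_sum, smul_smul]
    _ = ∑ b : κ, ∑ p : κ, ∑ q : κ, ∑ c : κ,
          (K b c * s p q c) • (ι Q (e' b) * (ι Q (e' p) * ι Q (e' q))) :=
        Finset.sum_congr rfl fun b _ => aux_rot _
    _ = ∑ b : κ, ∑ p : κ, ∑ q : κ,
          (∑ c : κ, K b c * s p q c) • (ι Q (e' b) * (ι Q (e' p) * ι Q (e' q))) := by
        simp only [← Finset.sum_smul]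
    _ = ∑ b : κ, ∑ p : κ, ∑ q : κ,
          (- T p q b) • (ι Q (e' b) * (ι Q (e' p) * ι Q (e' q))) := by
        simp_rw [hcon]
    _ = - ∑ b : κ, ∑ p : κ, ∑ q : κ,
          T p q b • (ι Q (e' b) * (ι Q (e' p) * ι Q (e' q))) := by
        simp only [neg_smul, Finset.sum_neg_distrib]
    _ = - ∑ p : κ, ∑ q : κ, ∑ c : κ,
          T p q c • (ι Q (e' c) * (ι Q (e' p) * ι Q (e' q))) := by
        rw [aux_rot (fun b p q =>
          T p q b • (ι Q (e' b) * (ι Q (e' p) * ι Q (e' q))))]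
end XYZ
section Csq
variable {g : Type*} [LieRing g] [LieAlgebra ℝ g]
variable {κ : Type*} [Fintype κ] [DecidableEq κ]
variable (B : g →ₗ[ℝ] g →ₗ[ℝ] ℝ) (Q : QuadraticForm ℝ g)

lemma aux_CG
    (hB_symm : ∀ x y : g, B x y = B y x)
    (hB_nondeg : ∀ x : g, (∀ y : g, B x y = 0) → x = 0)
    (hB_inv : ∀ x y z : g, B ⁅x, y⁆ z = B x ⁅y, z⁆)
    (e : Module.Basis κ ℝ g) (e' : κ → g)
    (h_dual : ∀ a b : κ, B (e a) (e' b) = if a = b then 1 else 0)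
    (hQ : ∀ v : g, Q v = (1 / 2 : ℝ) * B v v)
    (C : CliffordAlgebra Q)
    (hC : C = (1 / 6 : ℝ) •
      ∑ a : κ, ∑ b : κ, ∑ c : κ,
        (B (e a) ⁅e b, e c⁆) • (ι Q (e' a) * ι Q (e' b) * ι Q (e' c)))
    (v : g) :
    C * (∑ b : κ, ∑ c : κ, (B ⁅e b, e c⁆ v) • (ι Q (e' b) * ι Q (e' c)))
      = (∑ b : κ, ∑ c : κ, (B ⁅e b, e c⁆ v) • (ι Q (e' b) * ι Q (e' c))) * C := by
  have hG : ∀ w : g, C * ι Q w + ι Q w * C = (1 / 2 : ℝ) •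
      ∑ b : κ, ∑ c : κ, (B ⁅e b, e c⁆ w) • (ι Q (e' b) * ι Q (e' c)) :=
    aux_CC B Q hB_symm hB_nondeg hB_inv e e' h_dual hQ C hC
  -- the structure-constant tensor
  set T : κ → κ → κ → ℝ := fun p q c => B ⁅e p, e q⁆ ⁅e c, v⁆ with hT
  have t_anti : ∀ p q c, T q p c = - T p q c := by
    intro p q c
    rw [hT]
    simp only
    rw [show (⁅e q, e p⁆ : g) = -⁅e p, e q⁆ by rw [← lie_skew (e p) (e q), neg_neg],
      map_neg, LinearMap.neg_apply]
  have t_cyc : ∀ p q c, T p q c + T q c p + T c p q = 0 := by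
    intro p q c
    rw [hT]
    simp only
    rw [← hB_inv, ← hB_inv, ← hB_inv]
    have hj : (⁅⁅e p, e q⁆, e c⁆ + ⁅⁅e q, e c⁆, e p⁆ + ⁅⁅e c, e p⁆, e q⁆ : g) = 0 := by
      have h1 := lie_jacobi (e p) (e q) (e c)
      rw [show (⁅⁅e p, e q⁆, e c⁆ : g) = -⁅e c, ⁅e p, e q⁆⁆ by
            rw [← lie_skew ⁅e p, e q⁆ (e c)],
          show (⁅⁅e q, e c⁆, e p⁆ : g) = -⁅e p, ⁅e q, e c⁆⁆ by
            rw [← lie_skew ⁅e q, e c⁆ (e p)],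
          show (⁅⁅e c, e p⁆, e q⁆ : g) = -⁅e q, ⁅e c, e p⁆⁆ by
            rw [← lie_skew ⁅e c, e p⁆ (e q)]]
      rw [← neg_add, ← neg_add, neg_eq_zero, add_rotate]
      exact h1
    calc (B ⁅⁅e p, e q⁆, e c⁆) v + (B ⁅⁅e q, e c⁆, e p⁆) v + (B ⁅⁅e c, e p⁆, e q⁆) v
        = (B (⁅⁅e p, e q⁆, e c⁆ + ⁅⁅e q, e c⁆, e p⁆ + ⁅⁅e c, e p⁆, e q⁆)) v := by
          rw [map_add, map_add, LinearMap.add_apply, LinearMap.add_apply]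
      _ = 0 := by rw [hj]; simp
  have hpoint : ∀ b c : κ,
      C * (ι Q (e' b) * ι Q (e' c)) - (ι Q (e' b) * ι Q (e' c)) * C
        = (1 / 2 : ℝ) •
          ((∑ p : κ, ∑ q : κ, (B ⁅e p, e q⁆ (e' b)) • (ι Q (e' p) * ι Q (e' q)))
              * ι Q (e' c)
            - ι Q (e' b) *
              (∑ p : κ, ∑ q : κ, (B ⁅e p, e q⁆ (e' c)) • (ι Q (e' p) * ι Q (e' q)))) := by
    intro b c
    have hb := hG (e' b)
    have hc := hG (e' c)
    calc C * (ι Q (e' b) * ι Q (e' c)) - (ι Q (e' b) * ι Q (e' c)) * C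
        = (C * ι Q (e' b) + ι Q (e' b) * C) * ι Q (e' c)
            - ι Q (e' b) * (C * ι Q (e' c) + ι Q (e' c) * C) := by noncomm_ring
      _ = ((1 / 2 : ℝ) •
            ∑ p : κ, ∑ q : κ, (B ⁅e p, e q⁆ (e' b)) • (ι Q (e' p) * ι Q (e' q)))
              * ι Q (e' c)
          - ι Q (e' b) * ((1 / 2 : ℝ) •
            ∑ p : κ, ∑ q : κ, (B ⁅e p, e q⁆ (e' c)) • (ι Q (e' p) * ι Q (e' q))) := by
          rw [hb, hc]
      _ = _ := by rw [smul_mul_assoc, mul_smul_comm, smul_sub]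
  rw [← sub_eq_zero]
  have hsplit : C * (∑ b : κ, ∑ c : κ, (B ⁅e b, e c⁆) v • (ι Q (e' b) * ι Q (e' c)))
      - (∑ b : κ, ∑ c : κ, (B ⁅e b, e c⁆) v • (ι Q (e' b) * ι Q (e' c))) * C
      = ∑ b : κ, ∑ c : κ, (B ⁅e b, e c⁆) v •
          (C * (ι Q (e' b) * ι Q (e' c)) - (ι Q (e' b) * ι Q (e' c)) * C) := by
    simp only [Finset.mul_sum, Finset.sum_mul, ← Finset.sum_sub_distrib,
      mul_smul_comm, smul_mul_assoc, ← smul_sub]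
  rw [hsplit]
  have hswap : ∀ (b c : κ) (x : CliffordAlgebra Q),
      (B ⁅e b, e c⁆) v • ((1 / 2 : ℝ) • x) = (1 / 2 : ℝ) • ((B ⁅e b, e c⁆) v • x) :=
    fun _ _ _ => smul_comm _ _ _
  simp_rw [hpoint, hswap, ← Finset.smul_sum]
  simp_rw [smul_sub, Finset.sum_sub_distrib]
  have hcon1 : ∀ c p q : κ,
      (∑ b : κ, (B ⁅e b, e c⁆) v * (B ⁅e p, e q⁆) (e' b)) = T p q c := by
    intro c p q
    have hpt : ∀ b, (B ⁅e b, e c⁆) v * (B ⁅e p, e q⁆) (e' b)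
        = B (e b) ⁅e c, v⁆ * B (e' b) ⁅e p, e q⁆ := by
      intro b
      rw [hB_inv, hB_symm ⁅e p, e q⁆ (e' b)]
    simp_rw [hpt]
    rw [aux_contract2 B hB_symm hB_nondeg e e' h_dual ⁅e c, v⁆ ⁅e p, e q⁆,
      hB_symm, hT]
  have hcon2 : ∀ b p q : κ,
      (∑ c : κ, (B ⁅e b, e c⁆) v * (B ⁅e p, e q⁆) (e' c)) = - T p q b := by
    intro b p q
    have hpt : ∀ c, (B ⁅e b, e c⁆) v * (B ⁅e p, e q⁆) (e' c)
        = - (B (e c) ⁅e b, v⁆ * B (e' c) ⁅e p, e q⁆) := by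
      intro c
      rw [show (⁅e b, e c⁆ : g) = -⁅e c, e b⁆ by rw [lie_skew],
        map_neg, LinearMap.neg_apply, hB_inv, hB_symm ⁅e p, e q⁆ (e' c), neg_mul]
    simp_rw [hpt]
    rw [Finset.sum_neg_distrib,
      aux_contract2 B hB_symm hB_nondeg e e' h_dual ⁅e b, v⁆ ⁅e p, e q⁆,
      hB_symm, hT]
  rw [aux_P1 Q e' (fun b c => (B ⁅e b, e c⁆) v)
        (fun p q x => (B ⁅e p, e q⁆) (e' x)) T hcon1,
      aux_P2 Q e' (fun b c => (B ⁅e b, e c⁆) v)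
        (fun p q x => (B ⁅e p, e q⁆) (e' x)) T hcon2,
      sub_neg_eq_add,
      aux_XYZ B Q hB_symm hQ e' T t_anti t_cyc, smul_zero]
end Csq
section Csq2
variable {g : Type*} [LieRing g] [LieAlgebra ℝ g]
variable {κ : Type*} [Fintype κ] [DecidableEq κ]
variable (B : g →ₗ[ℝ] g →ₗ[ℝ] ℝ) (Q : QuadraticForm ℝ g)

lemma aux_Csq_central
    (hB_symm : ∀ x y : g, B x y = B y x)
    (hB_nondeg : ∀ x : g, (∀ y : g, B x y = 0) → x = 0)
    (hB_inv : ∀ x y z : g, B ⁅x, y⁆ z = B x ⁅y, z⁆)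
    (e : Module.Basis κ ℝ g) (e' : κ → g)
    (h_dual : ∀ a b : κ, B (e a) (e' b) = if a = b then 1 else 0)
    (hQ : ∀ v : g, Q v = (1 / 2 : ℝ) * B v v)
    (C : CliffordAlgebra Q)
    (hC : C = (1 / 6 : ℝ) •
      ∑ a : κ, ∑ b : κ, ∑ c : κ,
        (B (e a) ⁅e b, e c⁆) • (ι Q (e' a) * ι Q (e' b) * ι Q (e' c))) :
    ∀ x : CliffordAlgebra Q, (C * C) * x = x * (C * C) := by
  have hvec : ∀ v : g, (C * C) * ι Q v = ι Q v * (C * C) := by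
    intro v
    have hG := aux_CC B Q hB_symm hB_nondeg hB_inv e e' h_dual hQ C hC v
    have hCG := aux_CG B Q hB_symm hB_nondeg hB_inv e e' h_dual hQ C hC v
    have key : C * (C * ι Q v + ι Q v * C) = (C * ι Q v + ι Q v * C) * C := by
      rw [hG, mul_smul_comm, smul_mul_assoc, hCG]
    have h5 : C * C * ι Q v + C * ι Q v * C = C * ι Q v * C + ι Q v * (C * C) := by
      calc C * C * ι Q v + C * ι Q v * C
          = C * (C * ι Q v + ι Q v * C) := by noncomm_ring
        _ = (C * ι Q v + ι Q v * C) * C := key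
        _ = C * ι Q v * C + ι Q v * (C * C) := by noncomm_ring
    rw [add_comm (C * ι Q v * C)] at h5
    exact add_right_cancel h5
  intro x
  induction x using CliffordAlgebra.induction with
  | algebraMap r => exact (Algebra.commutes r (C * C)).symm
  | ι v => exact hvec v
  | mul a b ha hb => rw [← mul_assoc, ha, mul_assoc, hb, ← mul_assoc]
  | add a b ha hb => rw [mul_add, add_mul, ha, hb]
end Csq2
section UEA
attribute [local instance] LieRing.ofAssociativeRing
variable {g : Type*} [LieRing g] [LieAlgebra ℝ g]
variable {κ : Type*} [Fintype κ] [DecidableEq κ]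
variable (B : g →ₗ[ℝ] g →ₗ[ℝ] ℝ)

lemma aux_UEA_induction (z : UniversalEnvelopingAlgebra ℝ g)
    (h : ∀ ξ : g, z * UniversalEnvelopingAlgebra.ι ℝ ξ
      = UniversalEnvelopingAlgebra.ι ℝ ξ * z) :
    ∀ x : UniversalEnvelopingAlgebra ℝ g, z * x = x * z := by
  have hsurj : Function.Surjective (UniversalEnvelopingAlgebra.mkAlgHom ℝ g) :=
    RingCon.mkₐ_surjective _
  intro x
  obtain ⟨y, rfl⟩ := hsurj x
  induction y using TensorAlgebra.induction with
  | algebraMap r =>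
      rw [AlgHom.commutes]
      exact (Algebra.commutes r z).symm
  | ι m =>
      have : UniversalEnvelopingAlgebra.mkAlgHom ℝ g (TensorAlgebra.ι ℝ m)
          = UniversalEnvelopingAlgebra.ι ℝ m := by
        rw [UniversalEnvelopingAlgebra.ι_apply]
      rw [this]; exact h m
  | mul a b ha hb => rw [map_mul, ← mul_assoc, ha, mul_assoc, hb, ← mul_assoc]
  | add a b ha hb => rw [map_add, mul_add, add_mul, ha, hb]

lemma aux_Cas_central
    (hB_symm : ∀ x y : g, B x y = B y x)
    (hB_nondeg : ∀ x : g, (∀ y : g, B x y = 0) → x = 0)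
    (hB_inv : ∀ x y z : g, B ⁅x, y⁆ z = B x ⁅y, z⁆)
    (e : Module.Basis κ ℝ g) (e' : κ → g)
    (h_dual : ∀ a b : κ, B (e a) (e' b) = if a = b then 1 else 0) :
    ∀ x : UniversalEnvelopingAlgebra ℝ g,
      (∑ a : κ, UniversalEnvelopingAlgebra.ι ℝ (e' a)
          * UniversalEnvelopingAlgebra.ι ℝ (e a)) * x
        = x * (∑ a : κ, UniversalEnvelopingAlgebra.ι ℝ (e' a)
          * UniversalEnvelopingAlgebra.ι ℝ (e a)) := by
  set ιU : g →ₗ⁅ℝ⁆ UniversalEnvelopingAlgebra ℝ g := UniversalEnvelopingAlgebra.ι ℝ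
    with hιU
  have hlie : ∀ x y : g, ιU x * ιU y - ιU y * ιU x = ιU ⁅x, y⁆ := by
    intro x y
    rw [LieHom.map_lie, Ring.lie_def]
  refine aux_UEA_induction _ ?_
  intro ξ
  rw [← sub_eq_zero]
  have hsplit : (∑ a : κ, ιU (e' a) * ιU (e a)) * ιU ξ
        - ιU ξ * (∑ a : κ, ιU (e' a) * ιU (e a))
      = ∑ a : κ, (ιU (e' a) * ιU (e a) * ιU ξ - ιU ξ * (ιU (e' a) * ιU (e a))) := by
    rw [Finset.sum_mul, Finset.mul_sum, Finset.sum_sub_distrib]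
  rw [hsplit]
  have hpoint : ∀ a : κ, ιU (e' a) * ιU (e a) * ιU ξ - ιU ξ * (ιU (e' a) * ιU (e a))
      = ιU (e' a) * ιU ⁅e a, ξ⁆ + ιU ⁅e' a, ξ⁆ * ιU (e a) := by
    intro a
    calc ιU (e' a) * ιU (e a) * ιU ξ - ιU ξ * (ιU (e' a) * ιU (e a))
        = ιU (e' a) * (ιU (e a) * ιU ξ - ιU ξ * ιU (e a))
            + (ιU (e' a) * ιU ξ - ιU ξ * ιU (e' a)) * ιU (e a) := by noncomm_ring
      _ = ιU (e' a) * ιU ⁅e a, ξ⁆ + ιU ⁅e' a, ξ⁆ * ιU (e a) := by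
          rw [hlie (e a) ξ, hlie (e' a) ξ]
  simp_rw [hpoint]
  rw [Finset.sum_add_distrib]
  have ht1 : ∑ a : κ, ιU (e' a) * ιU ⁅e a, ξ⁆
      = ∑ a : κ, ∑ b : κ, (B ⁅e a, ξ⁆ (e' b)) • (ιU (e' a) * ιU (e b)) := by
    refine Finset.sum_congr rfl fun a _ => ?_
    conv_lhs => rw [show (⁅e a, ξ⁆ : g) = ∑ b : κ, (B ⁅e a, ξ⁆ (e' b)) • e b from
      (aux_exp1 B e e' h_dual ⁅e a, ξ⁆).symm]
    rw [show ιU (∑ b : κ, (B ⁅e a, ξ⁆ (e' b)) • e b)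
        = ∑ b : κ, (B ⁅e a, ξ⁆ (e' b)) • ιU (e b) from by
      rw [← LieHom.coe_toLinearMap]; simp [map_sum, map_smul]]
    rw [Finset.mul_sum]
    refine Finset.sum_congr rfl fun b _ => ?_
    rw [mul_smul_comm]
  have ht2 : ∑ a : κ, ιU ⁅e' a, ξ⁆ * ιU (e a)
      = ∑ a : κ, ∑ b : κ, (B (e a) ⁅e' b, ξ⁆) • (ιU (e' a) * ιU (e b)) := by
    have step1 : ∑ a : κ, ιU ⁅e' a, ξ⁆ * ιU (e a)
        = ∑ a : κ, ∑ b : κ, (B (e b) ⁅e' a, ξ⁆) • (ιU (e' b) * ιU (e a)) := by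
      refine Finset.sum_congr rfl fun a _ => ?_
      conv_lhs => rw [show (⁅e' a, ξ⁆ : g) = ∑ b : κ, (B (e b) ⁅e' a, ξ⁆) • e' b from
        (aux_exp2 B hB_symm hB_nondeg e e' h_dual ⁅e' a, ξ⁆).symm]
      rw [show ιU (∑ b : κ, (B (e b) ⁅e' a, ξ⁆) • e' b)
          = ∑ b : κ, (B (e b) ⁅e' a, ξ⁆) • ιU (e' b) from by
        rw [← LieHom.coe_toLinearMap]; simp [map_sum, map_smul]]
      rw [Finset.sum_mul]
      refine Finset.sum_congr rfl fun b _ => ?_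
      rw [smul_mul_assoc]
    rw [step1]
    exact Finset.sum_comm
  rw [ht1, ht2, ← Finset.sum_add_distrib]
  refine Finset.sum_eq_zero fun a _ => ?_
  rw [← Finset.sum_add_distrib]
  refine Finset.sum_eq_zero fun b _ => ?_
  rw [← add_smul]
  have hco : B ⁅e a, ξ⁆ (e' b) + B (e a) ⁅e' b, ξ⁆ = 0 := by
    rw [hB_inv, show (⁅ξ, e' b⁆ : g) = -⁅e' b, ξ⁆ by rw [lie_skew], map_neg]
    simp
  rw [hco, zero_smul]
end UEA

set_option maxHeartbeats 2000000 in
theorem cubic_dirac_operator_square_central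
    {g : Type*} [LieRing g] [LieAlgebra ℝ g] [FiniteDimensional ℝ g]
    -- the invariant, non-degenerate, symmetric bilinear form B
    (B : g →ₗ[ℝ] g →ₗ[ℝ] ℝ)
    (hB_symm : ∀ x y : g, B x y = B y x)
    (hB_nondeg : ∀ x : g, (∀ y : g, B x y = 0) → x = 0)
    (hB_inv : ∀ x y z : g, B ⁅x, y⁆ z = B x ⁅y, z⁆)
    -- a basis (e_a) and its B-dual basis (e^a)
    {κ : Type*} [Fintype κ] [DecidableEq κ] (e : Module.Basis κ ℝ g) (e' : κ → g)
    (h_dual : ∀ a b : κ, B (e a) (e' b) = if a = b then 1 else 0)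
    -- the Clifford algebra of the quadratic form Q(v) = (1/2)·B(v,v)
    (Q : QuadraticForm ℝ g) (hQ : ∀ v : g, Q v = (1 / 2 : ℝ) * B v v)
    -- the structure constants f_{abc}
    (f : κ → κ → κ → ℝ) (hf : ∀ a b c : κ, f a b c = B (e a) ⁅e b, e c⁆)
    -- the cubic element C
    (C : CliffordAlgebra Q)
    (hC : C = (1 / 6 : ℝ) •
      ∑ a : κ, ∑ b : κ, ∑ c : κ, f a b c • (ι Q (e' a) * ι Q (e' b) * ι Q (e' c)))
    -- the cubic Dirac operator D in W(g) = U(g) ⊗ Cl(g)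
    (D : UniversalEnvelopingAlgebra ℝ g ⊗[ℝ] CliffordAlgebra Q)
    (hD : D = (∑ a : κ,
        (UniversalEnvelopingAlgebra.ι ℝ (e a)) ⊗ₜ[ℝ] (ι Q (e' a)))
      - (1 : UniversalEnvelopingAlgebra ℝ g) ⊗ₜ[ℝ] C) :
    ∀ x : UniversalEnvelopingAlgebra ℝ g ⊗[ℝ] CliffordAlgebra Q,
      D ^ 2 * x = x * D ^ 2 := by
  have hC' : C = (1 / 6 : ℝ) •
      ∑ a : κ, ∑ b : κ, ∑ c : κ,
        (B (e a) ⁅e b, e c⁆) • (ι Q (e' a) * ι Q (e' b) * ι Q (e' c)) := by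
    rw [hC]; simp_rw [hf]
  letI : LieRing (UniversalEnvelopingAlgebra ℝ g) := LieRing.ofAssociativeRing
  set ιU : g →ₗ⁅ℝ⁆ UniversalEnvelopingAlgebra ℝ g := UniversalEnvelopingAlgebra.ι ℝ
    with hιU
  have hlie : ∀ x y : g, ιU x * ιU y - ιU y * ιU x = ιU ⁅x, y⁆ := by
    intro x y; rw [LieHom.map_lie, Ring.lie_def]
  set S : UniversalEnvelopingAlgebra ℝ g ⊗[ℝ] CliffordAlgebra Q :=
    ∑ a : κ, (ιU (e a)) ⊗ₜ[ℝ] (ι Q (e' a)) with hS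
  set Cas : UniversalEnvelopingAlgebra ℝ g := ∑ a : κ, ιU (e' a) * ιU (e a)
    with hCas
  -- expansion of the square
  have hexpand : D ^ 2 = S * S - (S * ((1 : UniversalEnvelopingAlgebra ℝ g) ⊗ₜ[ℝ] C)
      + ((1 : UniversalEnvelopingAlgebra ℝ g) ⊗ₜ[ℝ] C) * S)
      + ((1 : UniversalEnvelopingAlgebra ℝ g) ⊗ₜ[ℝ] C)
        * ((1 : UniversalEnvelopingAlgebra ℝ g) ⊗ₜ[ℝ] C) := by
    rw [hD, sq]; noncomm_ring
  have hlast : ((1 : UniversalEnvelopingAlgebra ℝ g) ⊗ₜ[ℝ] C)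
      * ((1 : UniversalEnvelopingAlgebra ℝ g) ⊗ₜ[ℝ] C)
      = (1 : UniversalEnvelopingAlgebra ℝ g) ⊗ₜ[ℝ] (C * C) := by
    rw [Algebra.TensorProduct.tmul_mul_tmul, one_mul]
  -- the cross term
  have hG := aux_CC B Q hB_symm hB_nondeg hB_inv e e' h_dual hQ C hC'
  have hcross : S * ((1 : UniversalEnvelopingAlgebra ℝ g) ⊗ₜ[ℝ] C)
      + ((1 : UniversalEnvelopingAlgebra ℝ g) ⊗ₜ[ℝ] C) * S
      = (1 / 2 : ℝ) • ∑ b : κ, ∑ c : κ,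
          (ιU ⁅e b, e c⁆) ⊗ₜ[ℝ] (ι Q (e' b) * ι Q (e' c)) := by
    rw [hS, Finset.sum_mul, Finset.mul_sum, ← Finset.sum_add_distrib]
    have hpt : ∀ a : κ,
        ((ιU (e a)) ⊗ₜ[ℝ] (ι Q (e' a))) * ((1 : UniversalEnvelopingAlgebra ℝ g) ⊗ₜ[ℝ] C)
          + ((1 : UniversalEnvelopingAlgebra ℝ g) ⊗ₜ[ℝ] C) * ((ιU (e a)) ⊗ₜ[ℝ] (ι Q (e' a)))
        = (ιU (e a)) ⊗ₜ[ℝ] ((1 / 2 : ℝ) •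
            ∑ b : κ, ∑ c : κ, (B ⁅e b, e c⁆ (e' a)) • (ι Q (e' b) * ι Q (e' c))) := by
      intro a
      rw [Algebra.TensorProduct.tmul_mul_tmul, Algebra.TensorProduct.tmul_mul_tmul,
        mul_one, one_mul, ← TensorProduct.tmul_add,
        add_comm (ι Q (e' a) * C) (C * ι Q (e' a)), hG (e' a)]
    simp_rw [hpt, TensorProduct.tmul_smul, ← Finset.smul_sum]
    congr 1
    -- ∑ a, (ιU (e a)) ⊗ₜ G (e' a) = ∑ b, ∑ c, ιU ⁅e b, e c⁆ ⊗ₜ (cb * cc)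
    calc ∑ a : κ, (ιU (e a)) ⊗ₜ[ℝ]
            (∑ b : κ, ∑ c : κ, (B ⁅e b, e c⁆ (e' a)) • (ι Q (e' b) * ι Q (e' c)))
        = ∑ a : κ, ∑ b : κ, ∑ c : κ, (B ⁅e b, e c⁆ (e' a)) •
            ((ιU (e a)) ⊗ₜ[ℝ] (ι Q (e' b) * ι Q (e' c))) := by
          simp_rw [TensorProduct.tmul_sum, TensorProduct.tmul_smul]
      _ = ∑ b : κ, ∑ c : κ, ∑ a : κ, (B ⁅e b, e c⁆ (e' a)) •
            ((ιU (e a)) ⊗ₜ[ℝ] (ι Q (e' b) * ι Q (e' c))) := aux_rot _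
      _ = ∑ b : κ, ∑ c : κ, (ιU ⁅e b, e c⁆) ⊗ₜ[ℝ] (ι Q (e' b) * ι Q (e' c)) := by
          refine Finset.sum_congr rfl fun b _ => Finset.sum_congr rfl fun c _ => ?_
          simp_rw [TensorProduct.smul_tmul', ← TensorProduct.sum_tmul]
          congr 1
          rw [show ∑ a : κ, (B ⁅e b, e c⁆ (e' a)) • ιU (e a)
              = ιU (∑ a : κ, (B ⁅e b, e c⁆ (e' a)) • e a) from by
            rw [← LieHom.coe_toLinearMap]; simp [map_sum, map_smul]]
          rw [aux_exp1 B e e' h_dual ⁅e b, e c⁆]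
  -- the square of S
  have hSS : S * S = (1 / 2 : ℝ) • (∑ b : κ, ∑ c : κ,
        (ιU ⁅e b, e c⁆) ⊗ₜ[ℝ] (ι Q (e' b) * ι Q (e' c)))
      + (1 / 2 : ℝ) • (Cas ⊗ₜ[ℝ] (1 : CliffordAlgebra Q)) := by
    have h1 : S * S = ∑ a : κ, ∑ b : κ,
        (ιU (e a) * ιU (e b)) ⊗ₜ[ℝ] (ι Q (e' a) * ι Q (e' b)) := by
      rw [hS, Finset.sum_mul]
      refine Finset.sum_congr rfl fun a _ => ?_
      rw [Finset.mul_sum]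
      refine Finset.sum_congr rfl fun b _ => ?_
      rw [Algebra.TensorProduct.tmul_mul_tmul]
    have h2 : S * S = ∑ a : κ, ∑ b : κ,
        (ιU (e b) * ιU (e a)) ⊗ₜ[ℝ] (ι Q (e' b) * ι Q (e' a)) := by
      rw [h1]; exact Finset.sum_comm
    have hdouble : S * S + S * S = (∑ a : κ, ∑ b : κ,
          (ιU ⁅e a, e b⁆) ⊗ₜ[ℝ] (ι Q (e' a) * ι Q (e' b)))
        + Cas ⊗ₜ[ℝ] (1 : CliffordAlgebra Q) := by
      nth_rewrite 1 [h1]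
      nth_rewrite 1 [h2]
      rw [← Finset.sum_add_distrib]
      simp_rw [← Finset.sum_add_distrib]
      have hpt : ∀ a b : κ,
          (ιU (e a) * ιU (e b)) ⊗ₜ[ℝ] (ι Q (e' a) * ι Q (e' b))
            + (ιU (e b) * ιU (e a)) ⊗ₜ[ℝ] (ι Q (e' b) * ι Q (e' a))
          = (ιU ⁅e a, e b⁆) ⊗ₜ[ℝ] (ι Q (e' a) * ι Q (e' b))
            + (B (e' a) (e' b)) • ((ιU (e b) * ιU (e a)) ⊗ₜ[ℝ] (1 : CliffordAlgebra Q)) := by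
        intro a b
        rw [show ιU (e a) * ιU (e b) = ιU ⁅e a, e b⁆ + ιU (e b) * ιU (e a) from by
            rw [← hlie]; abel,
          aux_swap B Q hB_symm hQ (e' a) (e' b),
          TensorProduct.add_tmul, TensorProduct.tmul_sub, TensorProduct.tmul_smul]
        abel
      simp_rw [hpt, Finset.sum_add_distrib]
      congr 1
      -- ∑ a, ∑ b, B (e' a) (e' b) • ((u b * u a) ⊗ 1) = Cas ⊗ 1
      calc ∑ a : κ, ∑ b : κ,
            (B (e' a) (e' b)) • ((ιU (e b) * ιU (e a)) ⊗ₜ[ℝ] (1 : CliffordAlgebra Q))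
          = ∑ a : κ, (ιU (e' a) * ιU (e a)) ⊗ₜ[ℝ] (1 : CliffordAlgebra Q) := by
            refine Finset.sum_congr rfl fun a _ => ?_
            simp_rw [TensorProduct.smul_tmul', ← TensorProduct.sum_tmul]
            congr 1
            simp_rw [← smul_mul_assoc, ← Finset.sum_mul]
            congr 1
            rw [show ∑ b : κ, (B (e' a) (e' b)) • ιU (e b)
                = ιU (∑ b : κ, (B (e' a) (e' b)) • e b) from by
              rw [← LieHom.coe_toLinearMap]; simp [map_sum, map_smul]]
            rw [aux_exp1 B e e' h_dual (e' a)]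
        _ = Cas ⊗ₜ[ℝ] (1 : CliffordAlgebra Q) := by
            rw [hCas, TensorProduct.sum_tmul]
    have hhalf : S * S = (1 / 2 : ℝ) • (S * S + S * S) := by
      rw [smul_add]
      rw [show ∀ y : UniversalEnvelopingAlgebra ℝ g ⊗[ℝ] CliffordAlgebra Q,
        (1 / 2 : ℝ) • y + (1 / 2 : ℝ) • y = y from fun y => by
          rw [← add_smul]; norm_num]
    rw [hhalf, hdouble, smul_add]
  -- the final formula for D ^ 2
  have hD2 : D ^ 2 = (1 / 2 : ℝ) • (Cas ⊗ₜ[ℝ] (1 : CliffordAlgebra Q))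
      + (1 : UniversalEnvelopingAlgebra ℝ g) ⊗ₜ[ℝ] (C * C) := by
    rw [hexpand, hSS, hcross, hlast]; abel
  have hCasc := aux_Cas_central B hB_symm hB_nondeg hB_inv e e' h_dual
  have hClc := aux_Csq_central B Q hB_symm hB_nondeg hB_inv e e' h_dual hQ C hC'
  intro x
  induction x using TensorProduct.induction_on with
  | zero => simp
  | tmul a b =>
      rw [hD2]
      simp only [add_mul, mul_add, smul_mul_assoc, mul_smul_comm,
        Algebra.TensorProduct.tmul_mul_tmul, one_mul, mul_one]
      rw [hCasc a, hClc b]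
  | add x y hx hy => rw [mul_add, add_mul, hx, hy]
end
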